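/- arXiv:2012.02021 — 7 statements merged into one kernel-verified Lean document; each statement's English description precedes it below -/
import Mathlib

section
/- Under the continuous extension X* = X + U, Y* = Y + V (with independent continuous perturbations U, V on [0,1], i.i.d. across copies), Spearman's rho is preserved: ρ^S(X*, Y*) = ρ^S(X, Y), where ρ^S(X,Y) = 3(P(C) - P(D)) with P(C) = P((X1-X2)(Y1-Y3) > 0), P(D) = P((X1-X2)(Y1-Y3) < 0) for independent copies (X1,Y1),(X2,Y2),(X3,Y3) of (X,Y). -/
set_option maxHeartbeats 1000000

open MeasureTheory ProbabilityTheory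

lemma addSign_pos (a : ℤ) (u : ℝ) (h1 : -1 < u) (h2 : u < 1) :
    0 < (a : ℝ) + u ↔ (0 < a ∨ (a = 0 ∧ 0 < u)) := by
  rcases lt_trichotomy a 0 with h | h | h
  · have h' : (a : ℝ) ≤ -1 := by exact_mod_cast (by omega : a ≤ -1)
    constructor
    · intro hp; exfalso; linarith
    · rintro (h'' | ⟨h'', _⟩) <;> omega
  · subst h; simp
  · have h' : (1 : ℝ) ≤ (a : ℝ) := by exact_mod_cast h
    exact ⟨fun _ => Or.inl h, fun _ => by linarith⟩

lemma addSign_neg (a : ℤ) (u : ℝ) (h1 : -1 < u) (h2 : u < 1) :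
    (a : ℝ) + u < 0 ↔ (a < 0 ∨ (a = 0 ∧ u < 0)) := by
  rcases lt_trichotomy a 0 with h | h | h
  · have h' : (a : ℝ) ≤ -1 := by exact_mod_cast (by omega : a ≤ -1)
    exact ⟨fun _ => Or.inl h, fun _ => by linarith⟩
  · subst h; simp
  · have h' : (1 : ℝ) ≤ (a : ℝ) := by exact_mod_cast h
    constructor
    · intro hp; exfalso; linarith
    · rintro (h'' | ⟨h'', _⟩) <;> omega

lemma keyC (a b : ℤ) (u v : ℝ) (hu1 : -1 < u) (hu2 : u < 1) (hv1 : -1 < v) (hv2 : v < 1) :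
    (0 < ((a : ℝ) + u) * ((b : ℝ) + v)) ↔
      ((0 < a ∧ 0 < b) ∨ ((a < 0 ∧ b < 0) ∨ ((a = 0 ∧ 0 < b ∧ 0 < u) ∨
        ((a = 0 ∧ b < 0 ∧ u < 0) ∨ ((0 < a ∧ b = 0 ∧ 0 < v) ∨ ((a < 0 ∧ b = 0 ∧ v < 0) ∨
        ((a = 0 ∧ b = 0 ∧ 0 < u ∧ 0 < v) ∨ (a = 0 ∧ b = 0 ∧ u < 0 ∧ v < 0)))))))) := by
  rw [mul_pos_iff, addSign_pos a u hu1 hu2, addSign_pos b v hv1 hv2,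
    addSign_neg a u hu1 hu2, addSign_neg b v hv1 hv2]
  tauto

lemma keyD (a b : ℤ) (u v : ℝ) (hu1 : -1 < u) (hu2 : u < 1) (hv1 : -1 < v) (hv2 : v < 1) :
    (((a : ℝ) + u) * ((b : ℝ) + v) < 0) ↔
      ((0 < a ∧ b < 0) ∨ ((a < 0 ∧ 0 < b) ∨ ((a = 0 ∧ b < 0 ∧ 0 < u) ∨
        ((a = 0 ∧ 0 < b ∧ u < 0) ∨ ((0 < a ∧ b = 0 ∧ v < 0) ∨ ((a < 0 ∧ b = 0 ∧ 0 < v) ∨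
        ((a = 0 ∧ b = 0 ∧ 0 < u ∧ v < 0) ∨ (a = 0 ∧ b = 0 ∧ u < 0 ∧ 0 < v)))))))) := by
  rw [mul_neg_iff, addSign_pos a u hu1 hu2, addSign_pos b v hv1 hv2,
    addSign_neg a u hu1 hu2, addSign_neg b v hv1 hv2]
  tauto



theorem spearman_aux {Ω : Type*} [MeasureSpace Ω] [IsProbabilityMeasure (ℙ : Measure Ω)]
    (A B : Ω → ℤ) (DU DV : Ω → ℝ)
    (mA : Measurable A) (mB : Measurable B) (mDU : Measurable DU) (mDV : Measurable DV)
    (hABDU : IndepFun (fun ω => (A ω, B ω)) DU ℙ)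
    (hABUV : IndepFun (fun ω => (A ω, B ω)) (fun ω => (DU ω, DV ω)) ℙ)
    (hDUDV : IndepFun DU DV ℙ)
    (hUsym : ℙ {ω | 0 < DU ω} = ℙ {ω | DU ω < 0})
    (hVsym : ℙ {ω | 0 < DV ω} = ℙ {ω | DV ω < 0})
    (hG : ∀ᵐ ω ∂ℙ, -1 < DU ω ∧ DU ω < 1 ∧ -1 < DV ω ∧ DV ω < 1) :
    3 * ((ℙ {ω | 0 < ((A ω : ℝ) + DU ω) * ((B ω : ℝ) + DV ω)}).toReal
       - (ℙ {ω | ((A ω : ℝ) + DU ω) * ((B ω : ℝ) + DV ω) < 0}).toReal)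
    = 3 * ((ℙ {ω | 0 < (A ω : ℝ) * (B ω : ℝ)}).toReal
         - (ℙ {ω | (A ω : ℝ) * (B ω : ℝ) < 0}).toReal) := by
  classical
  set s1 : Set Ω := {ω | 0 < A ω ∧ 0 < B ω} with hs1
  set s2 : Set Ω := {ω | A ω < 0 ∧ B ω < 0} with hs2
  set s3 : Set Ω := {ω | A ω = 0 ∧ 0 < B ω ∧ 0 < DU ω} with hs3
  set s4 : Set Ω := {ω | A ω = 0 ∧ B ω < 0 ∧ DU ω < 0} with hs4
  set s5 : Set Ω := {ω | 0 < A ω ∧ B ω = 0 ∧ 0 < DV ω} with hs5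
  set s6 : Set Ω := {ω | A ω < 0 ∧ B ω = 0 ∧ DV ω < 0} with hs6
  set s7 : Set Ω := {ω | A ω = 0 ∧ B ω = 0 ∧ 0 < DU ω ∧ 0 < DV ω} with hs7
  set s8 : Set Ω := {ω | A ω = 0 ∧ B ω = 0 ∧ DU ω < 0 ∧ DV ω < 0} with hs8
  set t1 : Set Ω := {ω | 0 < A ω ∧ B ω < 0} with ht1
  set t2 : Set Ω := {ω | A ω < 0 ∧ 0 < B ω} with ht2
  set t3 : Set Ω := {ω | A ω = 0 ∧ B ω < 0 ∧ 0 < DU ω} with ht3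
  set t4 : Set Ω := {ω | A ω = 0 ∧ 0 < B ω ∧ DU ω < 0} with ht4
  set t5 : Set Ω := {ω | 0 < A ω ∧ B ω = 0 ∧ DV ω < 0} with ht5
  set t6 : Set Ω := {ω | A ω < 0 ∧ B ω = 0 ∧ 0 < DV ω} with ht6
  set t7 : Set Ω := {ω | A ω = 0 ∧ B ω = 0 ∧ 0 < DU ω ∧ DV ω < 0} with ht7
  set t8 : Set Ω := {ω | A ω = 0 ∧ B ω = 0 ∧ DU ω < 0 ∧ 0 < DV ω} with ht8
  -- measurability of atoms
  have mAB : Measurable (fun ω => (A ω, B ω)) := mA.prodMk mB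
  have mUp : MeasurableSet {ω | 0 < DU ω} := measurableSet_lt measurable_const mDU
  have mUn : MeasurableSet {ω | DU ω < 0} := measurableSet_lt mDU measurable_const
  have mVp : MeasurableSet {ω | 0 < DV ω} := measurableSet_lt measurable_const mDV
  have mVn : MeasurableSet {ω | DV ω < 0} := measurableSet_lt mDV measurable_const
  have mAz : MeasurableSet {ω | A ω = 0} := mA (.of_discrete (s := {x | x = 0}))
  have mAp : MeasurableSet {ω | 0 < A ω} := mA (.of_discrete (s := {x | 0 < x}))
  have mAn : MeasurableSet {ω | A ω < 0} := mA (.of_discrete (s := {x | x < 0}))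
  have mBz : MeasurableSet {ω | B ω = 0} := mB (.of_discrete (s := {x | x = 0}))
  have mBp : MeasurableSet {ω | 0 < B ω} := mB (.of_discrete (s := {x | 0 < x}))
  have mBn : MeasurableSet {ω | B ω < 0} := mB (.of_discrete (s := {x | x < 0}))
  have m1 : MeasurableSet s1 := by rw [hs1]; simp only [Set.setOf_and]; exact mAp.inter mBp
  have m2 : MeasurableSet s2 := by rw [hs2]; simp only [Set.setOf_and]; exact mAn.inter mBn
  have m3 : MeasurableSet s3 := by
    rw [hs3]; simp only [Set.setOf_and]; exact mAz.inter (mBp.inter mUp)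
  have m4 : MeasurableSet s4 := by
    rw [hs4]; simp only [Set.setOf_and]; exact mAz.inter (mBn.inter mUn)
  have m5 : MeasurableSet s5 := by
    rw [hs5]; simp only [Set.setOf_and]; exact mAp.inter (mBz.inter mVp)
  have m6 : MeasurableSet s6 := by
    rw [hs6]; simp only [Set.setOf_and]; exact mAn.inter (mBz.inter mVn)
  have m7 : MeasurableSet s7 := by
    rw [hs7]; simp only [Set.setOf_and]; exact mAz.inter (mBz.inter (mUp.inter mVp))
  have m8 : MeasurableSet s8 := by
    rw [hs8]; simp only [Set.setOf_and]; exact mAz.inter (mBz.inter (mUn.inter mVn))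
  have n1 : MeasurableSet t1 := by rw [ht1]; simp only [Set.setOf_and]; exact mAp.inter mBn
  have n2 : MeasurableSet t2 := by rw [ht2]; simp only [Set.setOf_and]; exact mAn.inter mBp
  have n3 : MeasurableSet t3 := by
    rw [ht3]; simp only [Set.setOf_and]; exact mAz.inter (mBn.inter mUp)
  have n4 : MeasurableSet t4 := by
    rw [ht4]; simp only [Set.setOf_and]; exact mAz.inter (mBp.inter mUn)
  have n5 : MeasurableSet t5 := by
    rw [ht5]; simp only [Set.setOf_and]; exact mAp.inter (mBz.inter mVn)
  have n6 : MeasurableSet t6 := by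
    rw [ht6]; simp only [Set.setOf_and]; exact mAn.inter (mBz.inter mVp)
  have n7 : MeasurableSet t7 := by
    rw [ht7]; simp only [Set.setOf_and]; exact mAz.inter (mBz.inter (mUp.inter mVn))
  have n8 : MeasurableSet t8 := by
    rw [ht8]; simp only [Set.setOf_and]; exact mAz.inter (mBz.inter (mUn.inter mVp))
  -- disjointness
  have d1 : Disjoint s1 (s2 ∪ (s3 ∪ (s4 ∪ (s5 ∪ (s6 ∪ (s7 ∪ s8)))))) := by
    rw [Set.disjoint_left]; intro ω h1 h2
    simp only [hs1, hs2, hs3, hs4, hs5, hs6, hs7, hs8, Set.mem_union, Set.mem_setOf_eq] at h1 h2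
    obtain ⟨a1, a2⟩ := h1
    rcases h2 with ⟨g1,g2⟩|⟨g1,g2,g3⟩|⟨g1,g2,g3⟩|⟨g1,g2,g3⟩|⟨g1,g2,g3⟩|⟨g1,g2,g3,g4⟩|⟨g1,g2,g3,g4⟩ <;>
      omega
  have d2 : Disjoint s2 (s3 ∪ (s4 ∪ (s5 ∪ (s6 ∪ (s7 ∪ s8))))) := by
    rw [Set.disjoint_left]; intro ω h1 h2
    simp only [hs2, hs3, hs4, hs5, hs6, hs7, hs8, Set.mem_union, Set.mem_setOf_eq] at h1 h2
    obtain ⟨a1, a2⟩ := h1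
    rcases h2 with ⟨g1,g2,g3⟩|⟨g1,g2,g3⟩|⟨g1,g2,g3⟩|⟨g1,g2,g3⟩|⟨g1,g2,g3,g4⟩|⟨g1,g2,g3,g4⟩ <;> omega
  have d3 : Disjoint s3 (s4 ∪ (s5 ∪ (s6 ∪ (s7 ∪ s8)))) := by
    rw [Set.disjoint_left]; intro ω h1 h2
    simp only [hs3, hs4, hs5, hs6, hs7, hs8, Set.mem_union, Set.mem_setOf_eq] at h1 h2
    obtain ⟨a1, a2, a3⟩ := h1
    rcases h2 with ⟨g1,g2,g3⟩|⟨g1,g2,g3⟩|⟨g1,g2,g3⟩|⟨g1,g2,g3,g4⟩|⟨g1,g2,g3,g4⟩ <;> omega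
  have d4 : Disjoint s4 (s5 ∪ (s6 ∪ (s7 ∪ s8))) := by
    rw [Set.disjoint_left]; intro ω h1 h2
    simp only [hs4, hs5, hs6, hs7, hs8, Set.mem_union, Set.mem_setOf_eq] at h1 h2
    obtain ⟨a1, a2, a3⟩ := h1
    rcases h2 with ⟨g1,g2,g3⟩|⟨g1,g2,g3⟩|⟨g1,g2,g3,g4⟩|⟨g1,g2,g3,g4⟩ <;> omega
  have d5 : Disjoint s5 (s6 ∪ (s7 ∪ s8)) := by
    rw [Set.disjoint_left]; intro ω h1 h2
    simp only [hs5, hs6, hs7, hs8, Set.mem_union, Set.mem_setOf_eq] at h1 h2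
    obtain ⟨a1, a2, a3⟩ := h1
    rcases h2 with ⟨g1,g2,g3⟩|⟨g1,g2,g3,g4⟩|⟨g1,g2,g3,g4⟩ <;> omega
  have d6 : Disjoint s6 (s7 ∪ s8) := by
    rw [Set.disjoint_left]; intro ω h1 h2
    simp only [hs6, hs7, hs8, Set.mem_union, Set.mem_setOf_eq] at h1 h2
    obtain ⟨a1, a2, a3⟩ := h1
    rcases h2 with ⟨g1,g2,g3,g4⟩|⟨g1,g2,g3,g4⟩ <;> omega
  have d7 : Disjoint s7 s8 := by
    rw [Set.disjoint_left]; intro ω h1 h2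
    simp only [hs7, hs8, Set.mem_setOf_eq] at h1 h2
    obtain ⟨a1, a2, a3, a4⟩ := h1
    obtain ⟨g1, g2, g3, g4⟩ := h2
    linarith
  have f1 : Disjoint t1 (t2 ∪ (t3 ∪ (t4 ∪ (t5 ∪ (t6 ∪ (t7 ∪ t8)))))) := by
    rw [Set.disjoint_left]; intro ω h1 h2
    simp only [ht1, ht2, ht3, ht4, ht5, ht6, ht7, ht8, Set.mem_union, Set.mem_setOf_eq] at h1 h2
    obtain ⟨a1, a2⟩ := h1
    rcases h2 with ⟨g1,g2⟩|⟨g1,g2,g3⟩|⟨g1,g2,g3⟩|⟨g1,g2,g3⟩|⟨g1,g2,g3⟩|⟨g1,g2,g3,g4⟩|⟨g1,g2,g3,g4⟩ <;>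
      omega
  have f2 : Disjoint t2 (t3 ∪ (t4 ∪ (t5 ∪ (t6 ∪ (t7 ∪ t8))))) := by
    rw [Set.disjoint_left]; intro ω h1 h2
    simp only [ht2, ht3, ht4, ht5, ht6, ht7, ht8, Set.mem_union, Set.mem_setOf_eq] at h1 h2
    obtain ⟨a1, a2⟩ := h1
    rcases h2 with ⟨g1,g2,g3⟩|⟨g1,g2,g3⟩|⟨g1,g2,g3⟩|⟨g1,g2,g3⟩|⟨g1,g2,g3,g4⟩|⟨g1,g2,g3,g4⟩ <;> omega
  have f3 : Disjoint t3 (t4 ∪ (t5 ∪ (t6 ∪ (t7 ∪ t8)))) := by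
    rw [Set.disjoint_left]; intro ω h1 h2
    simp only [ht3, ht4, ht5, ht6, ht7, ht8, Set.mem_union, Set.mem_setOf_eq] at h1 h2
    obtain ⟨a1, a2, a3⟩ := h1
    rcases h2 with ⟨g1,g2,g3⟩|⟨g1,g2,g3⟩|⟨g1,g2,g3⟩|⟨g1,g2,g3,g4⟩|⟨g1,g2,g3,g4⟩ <;> omega
  have f4 : Disjoint t4 (t5 ∪ (t6 ∪ (t7 ∪ t8))) := by
    rw [Set.disjoint_left]; intro ω h1 h2
    simp only [ht4, ht5, ht6, ht7, ht8, Set.mem_union, Set.mem_setOf_eq] at h1 h2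
    obtain ⟨a1, a2, a3⟩ := h1
    rcases h2 with ⟨g1,g2,g3⟩|⟨g1,g2,g3⟩|⟨g1,g2,g3,g4⟩|⟨g1,g2,g3,g4⟩ <;> omega
  have f5 : Disjoint t5 (t6 ∪ (t7 ∪ t8)) := by
    rw [Set.disjoint_left]; intro ω h1 h2
    simp only [ht5, ht6, ht7, ht8, Set.mem_union, Set.mem_setOf_eq] at h1 h2
    obtain ⟨a1, a2, a3⟩ := h1
    rcases h2 with ⟨g1,g2,g3⟩|⟨g1,g2,g3,g4⟩|⟨g1,g2,g3,g4⟩ <;> omega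
  have f6 : Disjoint t6 (t7 ∪ t8) := by
    rw [Set.disjoint_left]; intro ω h1 h2
    simp only [ht6, ht7, ht8, Set.mem_union, Set.mem_setOf_eq] at h1 h2
    obtain ⟨a1, a2, a3⟩ := h1
    rcases h2 with ⟨g1,g2,g3,g4⟩|⟨g1,g2,g3,g4⟩ <;> omega
  have f7 : Disjoint t7 t8 := by
    rw [Set.disjoint_left]; intro ω h1 h2
    simp only [ht7, ht8, Set.mem_setOf_eq] at h1 h2
    obtain ⟨a1, a2, a3, a4⟩ := h1
    obtain ⟨g1, g2, g3, g4⟩ := h2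
    linarith
  -- sum decompositions
  have hCsum : ℙ (s1 ∪ (s2 ∪ (s3 ∪ (s4 ∪ (s5 ∪ (s6 ∪ (s7 ∪ s8)))))))
      = ℙ s1 + (ℙ s2 + (ℙ s3 + (ℙ s4 + (ℙ s5 + (ℙ s6 + (ℙ s7 + ℙ s8)))))) := by
    rw [measure_union d1 (m2.union (m3.union (m4.union (m5.union (m6.union (m7.union m8)))))),
        measure_union d2 (m3.union (m4.union (m5.union (m6.union (m7.union m8))))),
        measure_union d3 (m4.union (m5.union (m6.union (m7.union m8)))),
        measure_union d4 (m5.union (m6.union (m7.union m8))),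
        measure_union d5 (m6.union (m7.union m8)),
        measure_union d6 (m7.union m8),
        measure_union d7 m8]
  have hDsum : ℙ (t1 ∪ (t2 ∪ (t3 ∪ (t4 ∪ (t5 ∪ (t6 ∪ (t7 ∪ t8)))))))
      = ℙ t1 + (ℙ t2 + (ℙ t3 + (ℙ t4 + (ℙ t5 + (ℙ t6 + (ℙ t7 + ℙ t8)))))) := by
    rw [measure_union f1 (n2.union (n3.union (n4.union (n5.union (n6.union (n7.union n8)))))),
        measure_union f2 (n3.union (n4.union (n5.union (n6.union (n7.union n8))))),
        measure_union f3 (n4.union (n5.union (n6.union (n7.union n8)))),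
        measure_union f4 (n5.union (n6.union (n7.union n8))),
        measure_union f5 (n6.union (n7.union n8)),
        measure_union f6 (n7.union n8),
        measure_union f7 n8]
  -- derived independence
  have hABDV : IndepFun (fun ω => (A ω, B ω)) DV ℙ := hABUV.comp measurable_id measurable_snd
  have hUsym' : ℙ (DU ⁻¹' Set.Ioi 0) = ℙ (DU ⁻¹' Set.Iio 0) := hUsym
  have hVsym' : ℙ (DV ⁻¹' Set.Ioi 0) = ℙ (DV ⁻¹' Set.Iio 0) := hVsym
  have hUV : ∀ (F G : Set ℝ), MeasurableSet F → MeasurableSet G →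
      ℙ ((fun ω => (DU ω, DV ω)) ⁻¹' (F ×ˢ G)) = ℙ (DU ⁻¹' F) * ℙ (DV ⁻¹' G) := by
    intro F G hF hG
    have h : (fun ω => (DU ω, DV ω)) ⁻¹' (F ×ˢ G) = DU ⁻¹' F ∩ DV ⁻¹' G := rfl
    rw [h, hDUDV.measure_inter_preimage_eq_mul F G hF hG]
  -- preimage representations
  have hp3 : s3 = (fun ω => (A ω, B ω)) ⁻¹' ({p : ℤ × ℤ | p.1 = 0 ∧ 0 < p.2}) ∩ DU ⁻¹' Set.Ioi 0 := by
    rw [hs3]; ext ω; simp [Set.mem_prod]; tauto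
  have hq4 : t4 = (fun ω => (A ω, B ω)) ⁻¹' ({p : ℤ × ℤ | p.1 = 0 ∧ 0 < p.2}) ∩ DU ⁻¹' Set.Iio 0 := by
    rw [ht4]; ext ω; simp [Set.mem_prod]; tauto
  have hp4 : s4 = (fun ω => (A ω, B ω)) ⁻¹' ({p : ℤ × ℤ | p.1 = 0 ∧ p.2 < 0}) ∩ DU ⁻¹' Set.Iio 0 := by
    rw [hs4]; ext ω; simp [Set.mem_prod]; tauto
  have hq3 : t3 = (fun ω => (A ω, B ω)) ⁻¹' ({p : ℤ × ℤ | p.1 = 0 ∧ p.2 < 0}) ∩ DU ⁻¹' Set.Ioi 0 := by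
    rw [ht3]; ext ω; simp [Set.mem_prod]; tauto
  have hp5 : s5 = (fun ω => (A ω, B ω)) ⁻¹' ({p : ℤ × ℤ | 0 < p.1 ∧ p.2 = 0}) ∩ DV ⁻¹' Set.Ioi 0 := by
    rw [hs5]; ext ω; simp [Set.mem_prod]; tauto
  have hq5 : t5 = (fun ω => (A ω, B ω)) ⁻¹' ({p : ℤ × ℤ | 0 < p.1 ∧ p.2 = 0}) ∩ DV ⁻¹' Set.Iio 0 := by
    rw [ht5]; ext ω; simp [Set.mem_prod]; tauto
  have hp6 : s6 = (fun ω => (A ω, B ω)) ⁻¹' ({p : ℤ × ℤ | p.1 < 0 ∧ p.2 = 0}) ∩ DV ⁻¹' Set.Iio 0 := by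
    rw [hs6]; ext ω; simp [Set.mem_prod]; tauto
  have hq6 : t6 = (fun ω => (A ω, B ω)) ⁻¹' ({p : ℤ × ℤ | p.1 < 0 ∧ p.2 = 0}) ∩ DV ⁻¹' Set.Ioi 0 := by
    rw [ht6]; ext ω; simp [Set.mem_prod]; tauto
  have hp7 : s7 = (fun ω => (A ω, B ω)) ⁻¹' ({p : ℤ × ℤ | p.1 = 0 ∧ p.2 = 0})
      ∩ (fun ω => (DU ω, DV ω)) ⁻¹' (Set.Ioi 0 ×ˢ Set.Ioi 0) := by
    rw [hs7]; ext ω; simp [Set.mem_prod]; tauto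
  have hq7 : t7 = (fun ω => (A ω, B ω)) ⁻¹' ({p : ℤ × ℤ | p.1 = 0 ∧ p.2 = 0})
      ∩ (fun ω => (DU ω, DV ω)) ⁻¹' (Set.Ioi 0 ×ˢ Set.Iio 0) := by
    rw [ht7]; ext ω; simp [Set.mem_prod]; tauto
  have hp8 : s8 = (fun ω => (A ω, B ω)) ⁻¹' ({p : ℤ × ℤ | p.1 = 0 ∧ p.2 = 0})
      ∩ (fun ω => (DU ω, DV ω)) ⁻¹' (Set.Iio 0 ×ˢ Set.Iio 0) := by
    rw [hs8]; ext ω; simp [Set.mem_prod]; tauto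
  have hq8 : t8 = (fun ω => (A ω, B ω)) ⁻¹' ({p : ℤ × ℤ | p.1 = 0 ∧ p.2 = 0})
      ∩ (fun ω => (DU ω, DV ω)) ⁻¹' (Set.Iio 0 ×ˢ Set.Ioi 0) := by
    rw [ht8]; ext ω; simp [Set.mem_prod]; tauto
  -- key cancellation equalities
  have k34 : ℙ s3 = ℙ t4 := by
    rw [hp3, hq4,
      hABDU.measure_inter_preimage_eq_mul _ _ .of_discrete measurableSet_Ioi,
      hABDU.measure_inter_preimage_eq_mul _ _ .of_discrete measurableSet_Iio, hUsym']
  have k43 : ℙ s4 = ℙ t3 := by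
    rw [hp4, hq3,
      hABDU.measure_inter_preimage_eq_mul _ _ .of_discrete measurableSet_Iio,
      hABDU.measure_inter_preimage_eq_mul _ _ .of_discrete measurableSet_Ioi, hUsym']
  have k55 : ℙ s5 = ℙ t5 := by
    rw [hp5, hq5,
      hABDV.measure_inter_preimage_eq_mul _ _ .of_discrete measurableSet_Ioi,
      hABDV.measure_inter_preimage_eq_mul _ _ .of_discrete measurableSet_Iio, hVsym']
  have k66 : ℙ s6 = ℙ t6 := by
    rw [hp6, hq6,
      hABDV.measure_inter_preimage_eq_mul _ _ .of_discrete measurableSet_Iio,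
      hABDV.measure_inter_preimage_eq_mul _ _ .of_discrete measurableSet_Ioi, hVsym']
  have k77 : ℙ s7 = ℙ t7 := by
    rw [hp7, hq7,
      hABUV.measure_inter_preimage_eq_mul _ _ .of_discrete (measurableSet_Ioi.prod measurableSet_Ioi),
      hABUV.measure_inter_preimage_eq_mul _ _ .of_discrete (measurableSet_Ioi.prod measurableSet_Iio),
      hUV _ _ measurableSet_Ioi measurableSet_Ioi,
      hUV _ _ measurableSet_Ioi measurableSet_Iio, hVsym']
  have k88 : ℙ s8 = ℙ t8 := by
    rw [hp8, hq8,
      hABUV.measure_inter_preimage_eq_mul _ _ .of_discrete (measurableSet_Iio.prod measurableSet_Iio),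
      hABUV.measure_inter_preimage_eq_mul _ _ .of_discrete (measurableSet_Iio.prod measurableSet_Ioi),
      hUV _ _ measurableSet_Iio measurableSet_Iio,
      hUV _ _ measurableSet_Iio measurableSet_Ioi, hVsym']
  -- a.e. decompositions
  have hCeq : ℙ {ω | 0 < ((A ω : ℝ) + DU ω) * ((B ω : ℝ) + DV ω)}
      = ℙ (s1 ∪ (s2 ∪ (s3 ∪ (s4 ∪ (s5 ∪ (s6 ∪ (s7 ∪ s8))))))) := by
    apply measure_congr
    apply Filter.eventuallyEq_set.2
    filter_upwards [hG] with ω h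
    obtain ⟨h1, h2, h3, h4⟩ := h
    simp only [hs1, hs2, hs3, hs4, hs5, hs6, hs7, hs8, Set.mem_union, Set.mem_setOf_eq]
    exact keyC (A ω) (B ω) (DU ω) (DV ω) h1 h2 h3 h4
  have hDeq : ℙ {ω | ((A ω : ℝ) + DU ω) * ((B ω : ℝ) + DV ω) < 0}
      = ℙ (t1 ∪ (t2 ∪ (t3 ∪ (t4 ∪ (t5 ∪ (t6 ∪ (t7 ∪ t8))))))) := by
    apply measure_congr
    apply Filter.eventuallyEq_set.2
    filter_upwards [hG] with ω h
    obtain ⟨h1, h2, h3, h4⟩ := h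
    simp only [ht1, ht2, ht3, ht4, ht5, ht6, ht7, ht8, Set.mem_union, Set.mem_setOf_eq]
    exact keyD (A ω) (B ω) (DU ω) (DV ω) h1 h2 h3 h4
  -- RHS decompositions
  have hRC : ℙ {ω | 0 < (A ω : ℝ) * (B ω : ℝ)} = ℙ s1 + ℙ s2 := by
    have hd : Disjoint s1 s2 := by
      rw [Set.disjoint_left]; intro ω h1 h2
      simp only [hs1, hs2, Set.mem_setOf_eq] at h1 h2
      omega
    have he : {ω | 0 < (A ω : ℝ) * (B ω : ℝ)} = s1 ∪ s2 := by
      rw [hs1, hs2]; ext ω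
      simp only [Set.mem_union, Set.mem_setOf_eq, mul_pos_iff, Int.cast_pos, Int.cast_lt_zero]
    rw [he, measure_union hd m2]
  have hRD : ℙ {ω | (A ω : ℝ) * (B ω : ℝ) < 0} = ℙ t1 + ℙ t2 := by
    have hd : Disjoint t1 t2 := by
      rw [Set.disjoint_left]; intro ω h1 h2
      simp only [ht1, ht2, Set.mem_setOf_eq] at h1 h2
      omega
    have he : {ω | (A ω : ℝ) * (B ω : ℝ) < 0} = t1 ∪ t2 := by
      rw [ht1, ht2]; ext ω
      simp only [Set.mem_union, Set.mem_setOf_eq, mul_neg_iff, Int.cast_pos, Int.cast_lt_zero]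
    rw [he, measure_union hd n2]
  -- assemble
  have crepr : (ℙ {ω | 0 < ((A ω : ℝ) + DU ω) * ((B ω : ℝ) + DV ω)}).toReal
      = (ℙ s1).toReal + (ℙ s2).toReal + ((ℙ s3).toReal + (ℙ s4).toReal + (ℙ s5).toReal
        + (ℙ s6).toReal + (ℙ s7).toReal + (ℙ s8).toReal) := by
    rw [hCeq, hCsum]
    rw [ENNReal.toReal_add (measure_ne_top _ _) (by simp [ENNReal.add_ne_top, measure_ne_top]),
        ENNReal.toReal_add (measure_ne_top _ _) (by simp [ENNReal.add_ne_top, measure_ne_top]),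
        ENNReal.toReal_add (measure_ne_top _ _) (by simp [ENNReal.add_ne_top, measure_ne_top]),
        ENNReal.toReal_add (measure_ne_top _ _) (by simp [ENNReal.add_ne_top, measure_ne_top]),
        ENNReal.toReal_add (measure_ne_top _ _) (by simp [ENNReal.add_ne_top, measure_ne_top]),
        ENNReal.toReal_add (measure_ne_top _ _) (by simp [ENNReal.add_ne_top, measure_ne_top]),
        ENNReal.toReal_add (measure_ne_top _ _) (measure_ne_top _ _)]
    ring
  have drepr : (ℙ {ω | ((A ω : ℝ) + DU ω) * ((B ω : ℝ) + DV ω) < 0}).toReal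
      = (ℙ t1).toReal + (ℙ t2).toReal + ((ℙ s3).toReal + (ℙ s4).toReal + (ℙ s5).toReal
        + (ℙ s6).toReal + (ℙ s7).toReal + (ℙ s8).toReal) := by
    rw [hDeq, hDsum, ← k34, ← k43, ← k55, ← k66, ← k77, ← k88]
    rw [ENNReal.toReal_add (measure_ne_top _ _) (by simp [ENNReal.add_ne_top, measure_ne_top]),
        ENNReal.toReal_add (measure_ne_top _ _) (by simp [ENNReal.add_ne_top, measure_ne_top]),
        ENNReal.toReal_add (measure_ne_top _ _) (by simp [ENNReal.add_ne_top, measure_ne_top]),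
        ENNReal.toReal_add (measure_ne_top _ _) (by simp [ENNReal.add_ne_top, measure_ne_top]),
        ENNReal.toReal_add (measure_ne_top _ _) (by simp [ENNReal.add_ne_top, measure_ne_top]),
        ENNReal.toReal_add (measure_ne_top _ _) (by simp [ENNReal.add_ne_top, measure_ne_top]),
        ENNReal.toReal_add (measure_ne_top _ _) (measure_ne_top _ _)]
    ring
  have rcrepr : (ℙ {ω | 0 < (A ω : ℝ) * (B ω : ℝ)}).toReal = (ℙ s1).toReal + (ℙ s2).toReal := by
    rw [hRC, ENNReal.toReal_add (measure_ne_top _ _) (measure_ne_top _ _)]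
  have rdrepr : (ℙ {ω | (A ω : ℝ) * (B ω : ℝ) < 0}).toReal = (ℙ t1).toReal + (ℙ t2).toReal := by
    rw [hRD, ENNReal.toReal_add (measure_ne_top _ _) (measure_ne_top _ _)]
  rw [crepr, drepr, rcrepr, rdrepr]
  ring

theorem stmt4 {Ω : Type*} [MeasureSpace Ω] [IsProbabilityMeasure (ℙ : Measure Ω)]
    (X Y : Fin 3 → Ω → ℤ) (U V : Fin 3 → Ω → ℝ)
    (hXm : ∀ i, Measurable (X i)) (hYm : ∀ i, Measurable (Y i))
    (hUm : ∀ i, Measurable (U i)) (hVm : ∀ i, Measurable (V i))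
    -- the pairs (X i, Y i) are identically distributed
    (hXYid : ∀ i, IdentDistrib (fun ω => (X i ω, Y i ω)) (fun ω => (X 0 ω, Y 0 ω)) ℙ ℙ)
    -- the U i (resp. V i) are identically distributed
    (hUid : ∀ i, IdentDistrib (U i) (U 0) ℙ ℙ)
    (hVid : ∀ i, IdentDistrib (V i) (V 0) ℙ ℙ)
    -- the U i and V i are continuous random variables taking values in [0,1]
    (hU01 : ∀ i, ∀ᵐ ω ∂ℙ, U i ω ∈ Set.Icc (0 : ℝ) 1)
    (hV01 : ∀ i, ∀ᵐ ω ∂ℙ, V i ω ∈ Set.Icc (0 : ℝ) 1)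
    (hUcont : ∀ x : ℝ, ℙ (U 0 ⁻¹' {x}) = 0)
    (hVcont : ∀ x : ℝ, ℙ (V 0 ⁻¹' {x}) = 0)
    -- joint independence of the three pairs (X i, Y i), the three U i and the three V i
    (hindep :
      iIndepFun
        (β := fun i : Fin 3 ⊕ (Fin 3 ⊕ Fin 3) =>
          match i with
          | .inl _ => ℤ × ℤ
          | .inr _ => ℝ)
        (m := fun i =>
          match i with
          | .inl _ => inferInstanceAs (MeasurableSpace (ℤ × ℤ))
          | .inr _ => inferInstanceAs (MeasurableSpace ℝ))
        (fun i =>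
          match i with
          | .inl j => fun ω => (X j ω, Y j ω)
          | .inr (.inl j) => U j
          | .inr (.inr j) => V j) ℙ) :
    -- Spearman's rho is preserved by continuous extension
    3 * ((ℙ {ω | (((X 0 ω : ℝ) + U 0 ω) - ((X 1 ω : ℝ) + U 1 ω)) *
                   (((Y 0 ω : ℝ) + V 0 ω) - ((Y 2 ω : ℝ) + V 2 ω)) > 0}).toReal
         - (ℙ {ω | (((X 0 ω : ℝ) + U 0 ω) - ((X 1 ω : ℝ) + U 1 ω)) *
                   (((Y 0 ω : ℝ) + V 0 ω) - ((Y 2 ω : ℝ) + V 2 ω)) < 0}).toReal)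
      = 3 * ((ℙ {ω | ((X 0 ω : ℝ) - (X 1 ω : ℝ)) * ((Y 0 ω : ℝ) - (Y 2 ω : ℝ)) > 0}).toReal
             - (ℙ {ω | ((X 0 ω : ℝ) - (X 1 ω : ℝ)) * ((Y 0 ω : ℝ) - (Y 2 ω : ℝ)) < 0}).toReal) := by
  classical
  -- blocks
  have hABDU : IndepFun (fun ω => (X 0 ω - X 1 ω, Y 0 ω - Y 2 ω)) (fun ω => U 0 ω - U 1 ω) ℙ := by
    have h := hindep.indepFun_finset {Sum.inl 0, Sum.inl 1, Sum.inl 2}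
      {Sum.inr (Sum.inl 0), Sum.inr (Sum.inl 1)} (by decide)
      (by rintro (j | j | j)
          · exact (hXm j).prodMk (hYm j)
          · exact hUm j
          · exact hVm j)
    exact h.comp
      (φ := fun g : (∀ i : ({Sum.inl 0, Sum.inl 1, Sum.inl 2} : Finset (Fin 3 ⊕ (Fin 3 ⊕ Fin 3))),
            (match (↑i : Fin 3 ⊕ (Fin 3 ⊕ Fin 3)) with | .inl _ => ℤ × ℤ | .inr _ => ℝ)) =>
         ((g ⟨Sum.inl 0, by decide⟩).1 - (g ⟨Sum.inl 1, by decide⟩).1,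
          (g ⟨Sum.inl 0, by decide⟩).2 - (g ⟨Sum.inl 2, by decide⟩).2))
      (ψ := fun g : (∀ i : ({Sum.inr (Sum.inl 0), Sum.inr (Sum.inl 1)} : Finset (Fin 3 ⊕ (Fin 3 ⊕ Fin 3))),
            (match (↑i : Fin 3 ⊕ (Fin 3 ⊕ Fin 3)) with | .inl _ => ℤ × ℤ | .inr _ => ℝ)) =>
         g ⟨Sum.inr (Sum.inl 0), by decide⟩ - g ⟨Sum.inr (Sum.inl 1), by decide⟩)
      (by fun_prop) (by fun_prop)
  have hABUV : IndepFun (fun ω => (X 0 ω - X 1 ω, Y 0 ω - Y 2 ω))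
      (fun ω => (U 0 ω - U 1 ω, V 0 ω - V 2 ω)) ℙ := by
    have h := hindep.indepFun_finset {Sum.inl 0, Sum.inl 1, Sum.inl 2}
      {Sum.inr (Sum.inl 0), Sum.inr (Sum.inl 1), Sum.inr (Sum.inr 0), Sum.inr (Sum.inr 2)}
      (by decide)
      (by rintro (j | j | j)
          · exact (hXm j).prodMk (hYm j)
          · exact hUm j
          · exact hVm j)
    exact h.comp
      (φ := fun g : (∀ i : ({Sum.inl 0, Sum.inl 1, Sum.inl 2} : Finset (Fin 3 ⊕ (Fin 3 ⊕ Fin 3))),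
            (match (↑i : Fin 3 ⊕ (Fin 3 ⊕ Fin 3)) with | .inl _ => ℤ × ℤ | .inr _ => ℝ)) =>
         ((g ⟨Sum.inl 0, by decide⟩).1 - (g ⟨Sum.inl 1, by decide⟩).1,
          (g ⟨Sum.inl 0, by decide⟩).2 - (g ⟨Sum.inl 2, by decide⟩).2))
      (ψ := fun g : (∀ i : ({Sum.inr (Sum.inl 0), Sum.inr (Sum.inl 1), Sum.inr (Sum.inr 0),
            Sum.inr (Sum.inr 2)} : Finset (Fin 3 ⊕ (Fin 3 ⊕ Fin 3))),
            (match (↑i : Fin 3 ⊕ (Fin 3 ⊕ Fin 3)) with | .inl _ => ℤ × ℤ | .inr _ => ℝ)) =>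
         (g ⟨Sum.inr (Sum.inl 0), by decide⟩ - g ⟨Sum.inr (Sum.inl 1), by decide⟩,
          g ⟨Sum.inr (Sum.inr 0), by decide⟩ - g ⟨Sum.inr (Sum.inr 2), by decide⟩))
      (by fun_prop) (by fun_prop)
  have hDUDV : IndepFun (fun ω => U 0 ω - U 1 ω) (fun ω => V 0 ω - V 2 ω) ℙ := by
    have h := hindep.indepFun_finset {Sum.inr (Sum.inl 0), Sum.inr (Sum.inl 1)}
      {Sum.inr (Sum.inr 0), Sum.inr (Sum.inr 2)} (by decide)
      (by rintro (j | j | j)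
          · exact (hXm j).prodMk (hYm j)
          · exact hUm j
          · exact hVm j)
    exact h.comp
      (φ := fun g : (∀ i : ({Sum.inr (Sum.inl 0), Sum.inr (Sum.inl 1)} : Finset (Fin 3 ⊕ (Fin 3 ⊕ Fin 3))),
            (match (↑i : Fin 3 ⊕ (Fin 3 ⊕ Fin 3)) with | .inl _ => ℤ × ℤ | .inr _ => ℝ)) =>
         g ⟨Sum.inr (Sum.inl 0), by decide⟩ - g ⟨Sum.inr (Sum.inl 1), by decide⟩)
      (ψ := fun g : (∀ i : ({Sum.inr (Sum.inr 0), Sum.inr (Sum.inr 2)} : Finset (Fin 3 ⊕ (Fin 3 ⊕ Fin 3))),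
            (match (↑i : Fin 3 ⊕ (Fin 3 ⊕ Fin 3)) with | .inl _ => ℤ × ℤ | .inr _ => ℝ)) =>
         g ⟨Sum.inr (Sum.inr 0), by decide⟩ - g ⟨Sum.inr (Sum.inr 2), by decide⟩)
      (by fun_prop) (by fun_prop)
  -- symmetry of the sign of DU and DV
  have hswap : ∀ (W : Fin 3 → Ω → ℝ) (k : Fin 3), (∀ i, Measurable (W i)) →
      IndepFun (W 0) (W k) ℙ → (Measure.map (W k) ℙ = Measure.map (W 0) ℙ) →
      ℙ {ω | 0 < W 0 ω - W k ω} = ℙ {ω | W 0 ω - W k ω < 0} := by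
    intro W k hWm hind hmapk
    haveI : IsProbabilityMeasure (Measure.map (W 0) ℙ) := Measure.isProbabilityMeasure_map (hWm 0).aemeasurable
    have hmap : Measure.map (fun ω => (W 0 ω, W k ω)) ℙ = (Measure.map (W 0) ℙ).prod (Measure.map (W k) ℙ) :=
      (indepFun_iff_map_prod_eq_prod_map_map (hWm 0).aemeasurable (hWm k).aemeasurable).1 hind
    have h1 : {ω | 0 < W 0 ω - W k ω} = (fun ω => (W 0 ω, W k ω)) ⁻¹' {p : ℝ × ℝ | p.2 < p.1} := by
      ext ω; simp [sub_pos]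
    have h2 : {ω | W 0 ω - W k ω < 0} = (fun ω => (W 0 ω, W k ω)) ⁻¹' {p : ℝ × ℝ | p.1 < p.2} := by
      ext ω; simp [sub_neg]
    rw [h1, h2,
      ← Measure.map_apply ((hWm 0).prodMk (hWm k)) (measurableSet_lt measurable_snd measurable_fst),
      ← Measure.map_apply ((hWm 0).prodMk (hWm k)) (measurableSet_lt measurable_fst measurable_snd),
      hmap, hmapk]
    conv_lhs => rw [← Measure.prod_swap]
    rw [Measure.map_apply measurable_swap (measurableSet_lt measurable_snd measurable_fst)]
    rfl
  have hUsym : ℙ {ω | 0 < U 0 ω - U 1 ω} = ℙ {ω | U 0 ω - U 1 ω < 0} := by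
    refine hswap U 1 hUm ?_ (hUid 1).map_eq
    exact hindep.indepFun (i := Sum.inr (Sum.inl 0)) (j := Sum.inr (Sum.inl 1)) (by decide)
  have hVsym : ℙ {ω | 0 < V 0 ω - V 2 ω} = ℙ {ω | V 0 ω - V 2 ω < 0} := by
    refine hswap V 2 hVm ?_ (hVid 2).map_eq
    exact hindep.indepFun (i := Sum.inr (Sum.inr 0)) (j := Sum.inr (Sum.inr 2)) (by decide)
  -- a.e. facts
  have hUpt : ∀ (c : ℝ), ℙ (U 0 ⁻¹' {c}) = 0 := hUcont
  have hVpt : ∀ (c : ℝ), ℙ (V 0 ⁻¹' {c}) = 0 := hVcont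
  have hne : ∀ (W : Ω → ℝ) (c : ℝ), ℙ (W ⁻¹' {c}) = 0 → ∀ᵐ ω ∂ℙ, W ω ≠ c := by
    intro W c h
    have he : {a | ¬ W a ≠ c} = W ⁻¹' {c} := by ext a; simp
    rw [ae_iff, he]; exact h
  have hG : ∀ᵐ ω ∂ℙ, -1 < U 0 ω - U 1 ω ∧ U 0 ω - U 1 ω < 1
      ∧ -1 < V 0 ω - V 2 ω ∧ V 0 ω - V 2 ω < 1 := by
    filter_upwards [hU01 0, hU01 1, hV01 0, hV01 2, hne (U 0) 0 (hUpt 0), hne (U 0) 1 (hUpt 1),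
      hne (V 0) 0 (hVpt 0), hne (V 0) 1 (hVpt 1)] with ω p1 p2 p3 p4 q1 q2 q3 q4
    obtain ⟨a1, a2⟩ := p1
    obtain ⟨b1, b2⟩ := p2
    obtain ⟨c1, c2⟩ := p3
    obtain ⟨e1, e2⟩ := p4
    have h1 : 0 < U 0 ω := lt_of_le_of_ne a1 (Ne.symm q1)
    have h2 : U 0 ω < 1 := lt_of_le_of_ne a2 q2
    have h3 : 0 < V 0 ω := lt_of_le_of_ne c1 (Ne.symm q3)
    have h4 : V 0 ω < 1 := lt_of_le_of_ne c2 q4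
    exact ⟨by linarith, by linarith, by linarith, by linarith⟩
  -- rewrite the goal sets
  have ec : {ω | (((X 0 ω : ℝ) + U 0 ω) - ((X 1 ω : ℝ) + U 1 ω)) *
        (((Y 0 ω : ℝ) + V 0 ω) - ((Y 2 ω : ℝ) + V 2 ω)) > 0}
      = {ω | 0 < (((X 0 ω - X 1 ω : ℤ) : ℝ) + (U 0 ω - U 1 ω)) *
            (((Y 0 ω - Y 2 ω : ℤ) : ℝ) + (V 0 ω - V 2 ω))} := by
    ext ω
    simp only [Set.mem_setOf_eq, gt_iff_lt]
    constructor <;> intro h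
    · convert h using 2 <;> push_cast <;> ring
    · convert h using 2 <;> push_cast <;> ring
  have ed : {ω | (((X 0 ω : ℝ) + U 0 ω) - ((X 1 ω : ℝ) + U 1 ω)) *
        (((Y 0 ω : ℝ) + V 0 ω) - ((Y 2 ω : ℝ) + V 2 ω)) < 0}
      = {ω | (((X 0 ω - X 1 ω : ℤ) : ℝ) + (U 0 ω - U 1 ω)) *
            (((Y 0 ω - Y 2 ω : ℤ) : ℝ) + (V 0 ω - V 2 ω)) < 0} := by
    ext ω
    simp only [Set.mem_setOf_eq]
    constructor <;> intro h
    · convert h using 2 <;> push_cast <;> ring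
    · convert h using 2 <;> push_cast <;> ring
  have erc : {ω | ((X 0 ω : ℝ) - (X 1 ω : ℝ)) * ((Y 0 ω : ℝ) - (Y 2 ω : ℝ)) > 0}
      = {ω | 0 < ((X 0 ω - X 1 ω : ℤ) : ℝ) * ((Y 0 ω - Y 2 ω : ℤ) : ℝ)} := by
    ext ω
    simp only [Set.mem_setOf_eq, gt_iff_lt]
    constructor <;> intro h
    · convert h using 2 <;> push_cast <;> ring
    · convert h using 2 <;> push_cast <;> ring
  have erd : {ω | ((X 0 ω : ℝ) - (X 1 ω : ℝ)) * ((Y 0 ω : ℝ) - (Y 2 ω : ℝ)) < 0}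
      = {ω | ((X 0 ω - X 1 ω : ℤ) : ℝ) * ((Y 0 ω - Y 2 ω : ℤ) : ℝ) < 0} := by
    ext ω
    simp only [Set.mem_setOf_eq]
    constructor <;> intro h
    · convert h using 2 <;> push_cast <;> ring
    · convert h using 2 <;> push_cast <;> ring
  rw [ec, ed, erc, erd]
  exact spearman_aux (fun ω => X 0 ω - X 1 ω) (fun ω => Y 0 ω - Y 2 ω)
    (fun ω => U 0 ω - U 1 ω) (fun ω => V 0 ω - V 2 ω)
    ((hXm 0).sub (hXm 1)) ((hYm 0).sub (hYm 2)) ((hUm 0).sub (hUm 1)) ((hVm 0).sub (hVm 2))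
    hABDU hABUV hDUDV hUsym hVsym hG
end

section
/- Let (X1,Y1) and (X2,Y3) be random pairs with X2 and Y3 independent and with the same marginal distributions as X1 and Y1 respectively. If P(X1 ≤ u, Y1 ≤ v) ≤ P(X2 ≤ u)·P(Y3 ≤ v) for all real u,v, and all variables are continued by adding independent continuous perturbations U (to the X's) and V (to the Y's) on [0,1], with U independent of V, then P(X1* ≤ s, Y1* ≤ t) ≤ P(X2* ≤ s)·P(Y3* ≤ t) for all real s,t; i.e., the concordance order is preserved by continuous extension. -/
open MeasureTheory ProbabilityTheory
open scoped ENNReal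

lemma indep_joint_eq {Ω α β : Type*} [MeasureSpace Ω] [IsProbabilityMeasure (ℙ : Measure Ω)]
    [MeasurableSpace α] [MeasurableSpace β]
    {A : Ω → α} {B : Ω → β} (hA : Measurable A) (hB : Measurable B)
    (h : IndepFun A B ℙ) {s : Set (α × β)} (hs : MeasurableSet s) :
    ℙ {ω | (A ω, B ω) ∈ s} = ∫⁻ a, (Measure.map B ℙ) (Prod.mk a ⁻¹' s) ∂(Measure.map A ℙ) := by
  haveI := Measure.isProbabilityMeasure_map (μ := ℙ) hB.aemeasurable
  have hmap := (ProbabilityTheory.indepFun_iff_map_prod_eq_prod_map_map hA.aemeasurable hB.aemeasurable).mp h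
  have h1 : ℙ {ω | (A ω, B ω) ∈ s} = Measure.map (fun ω => (A ω, B ω)) ℙ s := by
    rw [Measure.map_apply (hA.prodMk hB) hs]; rfl
  rw [h1, hmap, Measure.prod_apply hs]

theorem stmt5 {Ω : Type*} [MeasureSpace Ω] [IsProbabilityMeasure (ℙ : Measure Ω)]
    (X1 Y1 X2 Y3 U V : Ω → ℝ)
    (hX1 : Measurable X1) (hY1 : Measurable Y1) (hX2 : Measurable X2) (hY3 : Measurable Y3)
    (hU : Measurable U) (hV : Measurable V)
    -- X2 and Y3 are independent, with the same marginals as X1 and Y1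
    (hX2Y3 : IndepFun X2 Y3 ℙ)
    (hidX : IdentDistrib X2 X1 ℙ ℙ) (hidY : IdentDistrib Y3 Y1 ℙ ℙ)
    -- concordance order hypothesis
    (hconc : ∀ u v : ℝ,
      ℙ {ω | X1 ω ≤ u ∧ Y1 ω ≤ v} ≤ ℙ {ω | X2 ω ≤ u} * ℙ {ω | Y3 ω ≤ v})
    -- U and V are independent continuous perturbations on [0,1], independent of the data
    (hUV : IndepFun U V ℙ)
    (hind : IndepFun (fun ω => (U ω, V ω)) (fun ω => (X1 ω, Y1 ω, X2 ω, Y3 ω)) ℙ)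
    (hU01 : ∀ᵐ ω ∂ℙ, U ω ∈ Set.Icc (0 : ℝ) 1) (hV01 : ∀ᵐ ω ∂ℙ, V ω ∈ Set.Icc (0 : ℝ) 1)
    (hUcont : ∀ x : ℝ, ℙ (U ⁻¹' {x}) = 0) (hVcont : ∀ x : ℝ, ℙ (V ⁻¹' {x}) = 0) :
    ∀ s t : ℝ,
      ℙ {ω | X1 ω + U ω ≤ s ∧ Y1 ω + V ω ≤ t}
        ≤ ℙ {ω | X2 ω + U ω ≤ s} * ℙ {ω | Y3 ω + V ω ≤ t} := by
  intro s t
  have hW : Measurable (fun ω => (U ω, V ω)) := hU.prodMk hV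
  have hZ : Measurable (fun ω => (X1 ω, Y1 ω, X2 ω, Y3 ω)) :=
    hX1.prodMk (hY1.prodMk (hX2.prodMk hY3))
  -- marginal cdf-like functions
  set f : ℝ → ℝ≥0∞ := fun u => ℙ {ω | X2 ω ≤ s - u} with hf_def
  set g : ℝ → ℝ≥0∞ := fun v => ℙ {ω | Y3 ω ≤ t - v} with hg_def
  have hf_anti : Antitone f := fun a b hab => by
    apply measure_mono; intro ω hω
    simp only [Set.mem_setOf_eq] at hω ⊢; linarith
  have hg_anti : Antitone g := fun a b hab => by
    apply measure_mono; intro ω hω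
    simp only [Set.mem_setOf_eq] at hω ⊢; linarith
  have hf_m : Measurable f := hf_anti.measurable
  have hg_m : Measurable g := hg_anti.measurable
  -- the big set
  have hS : MeasurableSet {p : (ℝ × ℝ) × ℝ × ℝ × ℝ × ℝ | p.2.1 + p.1.1 ≤ s ∧ p.2.2.1 + p.1.2 ≤ t} := by
    rw [Set.setOf_and]
    exact (measurableSet_le (by fun_prop) measurable_const).inter
      (measurableSet_le (by fun_prop) measurable_const)
  have hL : ℙ {ω | X1 ω + U ω ≤ s ∧ Y1 ω + V ω ≤ t}
      = ∫⁻ w : ℝ × ℝ, ℙ {ω | X1 ω + w.1 ≤ s ∧ Y1 ω + w.2 ≤ t}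
          ∂(Measure.map (fun ω => (U ω, V ω)) ℙ) := by
    have e1 : ℙ {ω | X1 ω + U ω ≤ s ∧ Y1 ω + V ω ≤ t}
        = ℙ {ω | ((U ω, V ω), (X1 ω, Y1 ω, X2 ω, Y3 ω))
            ∈ {p : (ℝ × ℝ) × ℝ × ℝ × ℝ × ℝ | p.2.1 + p.1.1 ≤ s ∧ p.2.2.1 + p.1.2 ≤ t}} := rfl
    rw [e1, indep_joint_eq hW hZ hind hS]
    refine lintegral_congr fun w => ?_
    rw [Measure.map_apply hZ (measurable_prodMk_left hS)]
    rfl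
  have hbound : ∀ w : ℝ × ℝ,
      ℙ {ω | X1 ω + w.1 ≤ s ∧ Y1 ω + w.2 ≤ t} ≤ f w.1 * g w.2 := by
    intro w
    have h1 : {ω | X1 ω + w.1 ≤ s ∧ Y1 ω + w.2 ≤ t}
        = {ω | X1 ω ≤ s - w.1 ∧ Y1 ω ≤ t - w.2} := by
      ext ω; constructor <;> (rintro ⟨h1, h2⟩; exact ⟨by linarith, by linarith⟩)
    rw [h1]
    exact hconc (s - w.1) (t - w.2)
  have hWprod : Measure.map (fun ω => (U ω, V ω)) ℙ
      = (Measure.map U ℙ).prod (Measure.map V ℙ) :=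
    (ProbabilityTheory.indepFun_iff_map_prod_eq_prod_map_map hU.aemeasurable hV.aemeasurable).mp hUV
  have step1 : ℙ {ω | X1 ω + U ω ≤ s ∧ Y1 ω + V ω ≤ t}
      ≤ (∫⁻ u, f u ∂(Measure.map U ℙ)) * (∫⁻ v, g v ∂(Measure.map V ℙ)) := by
    rw [hL]
    calc ∫⁻ w : ℝ × ℝ, ℙ {ω | X1 ω + w.1 ≤ s ∧ Y1 ω + w.2 ≤ t}
          ∂(Measure.map (fun ω => (U ω, V ω)) ℙ)
        ≤ ∫⁻ w : ℝ × ℝ, f w.1 * g w.2 ∂(Measure.map (fun ω => (U ω, V ω)) ℙ) :=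
          lintegral_mono hbound
      _ = ∫⁻ w : ℝ × ℝ, f w.1 * g w.2 ∂((Measure.map U ℙ).prod (Measure.map V ℙ)) := by
          rw [hWprod]
      _ = (∫⁻ u, f u ∂(Measure.map U ℙ)) * (∫⁻ v, g v ∂(Measure.map V ℙ)) :=
          lintegral_prod_mul hf_m.aemeasurable hg_m.aemeasurable
  -- identify each factor
  have hUX2 : IndepFun U X2 ℙ :=
    hind.comp measurable_fst (measurable_fst.comp (measurable_snd.comp measurable_snd))
  have hVY3 : IndepFun V Y3 ℙ :=
    hind.comp measurable_snd (measurable_snd.comp (measurable_snd.comp measurable_snd))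
  have hSx : MeasurableSet {p : ℝ × ℝ | p.2 + p.1 ≤ s} :=
    measurableSet_le (by fun_prop) measurable_const
  have hSy : MeasurableSet {p : ℝ × ℝ | p.2 + p.1 ≤ t} :=
    measurableSet_le (by fun_prop) measurable_const
  have hx : ℙ {ω | X2 ω + U ω ≤ s} = ∫⁻ u, f u ∂(Measure.map U ℙ) := by
    have e1 : ℙ {ω | X2 ω + U ω ≤ s}
        = ℙ {ω | (U ω, X2 ω) ∈ {p : ℝ × ℝ | p.2 + p.1 ≤ s}} := rfl
    rw [e1, indep_joint_eq hU hX2 hUX2 hSx]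
    refine lintegral_congr fun u => ?_
    rw [Measure.map_apply hX2 (measurable_prodMk_left hSx)]
    congr 1
    ext ω
    simp only [Set.mem_preimage, Set.mem_setOf_eq]
    constructor <;> intro h <;> linarith
  have hy : ℙ {ω | Y3 ω + V ω ≤ t} = ∫⁻ v, g v ∂(Measure.map V ℙ) := by
    have e1 : ℙ {ω | Y3 ω + V ω ≤ t}
        = ℙ {ω | (V ω, Y3 ω) ∈ {p : ℝ × ℝ | p.2 + p.1 ≤ t}} := rfl
    rw [e1, indep_joint_eq hV hY3 hVY3 hSy]
    refine lintegral_congr fun v => ?_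
    rw [Measure.map_apply hY3 (measurable_prodMk_left hSy)]
    congr 1
    ext ω
    simp only [Set.mem_preimage, Set.mem_setOf_eq]
    constructor <;> intro h <;> linarith
  rw [hx, hy]
  exact step1
end

section
/- If (X,Y) is positively quadrant dependent (PQD), i.e., P(X ≤ u, Y ≤ v) ≥ P(X ≤ u)P(Y ≤ v) for all u,v, and X* = X + U, Y* = Y + V with U, V independent continuous random variables on [0,1] independent of (X,Y), then (X*, Y*) is also PQD. -/
open MeasureTheory ProbabilityTheory

theorem stmt6 {Ω : Type*} [MeasureSpace Ω] [IsProbabilityMeasure (ℙ : Measure Ω)]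
    (X Y U V : Ω → ℝ)
    (hX : Measurable X) (hY : Measurable Y) (hU : Measurable U) (hV : Measurable V)
    -- (X,Y) is positively quadrant dependent
    (hPQD : ∀ u v : ℝ, ℙ {ω | X ω ≤ u} * ℙ {ω | Y ω ≤ v} ≤ ℙ {ω | X ω ≤ u ∧ Y ω ≤ v})
    -- U and V are independent continuous random variables on [0,1], independent of (X,Y)
    (hUV : IndepFun U V ℙ)
    (hind : IndepFun (fun ω => (U ω, V ω)) (fun ω => (X ω, Y ω)) ℙ)
    (hU01 : ∀ᵐ ω ∂ℙ, U ω ∈ Set.Icc (0 : ℝ) 1) (hV01 : ∀ᵐ ω ∂ℙ, V ω ∈ Set.Icc (0 : ℝ) 1)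
    (hUcont : ∀ x : ℝ, ℙ (U ⁻¹' {x}) = 0) (hVcont : ∀ x : ℝ, ℙ (V ⁻¹' {x}) = 0) :
    ∀ u v : ℝ,
      ℙ {ω | X ω + U ω ≤ u} * ℙ {ω | Y ω + V ω ≤ v}
        ≤ ℙ {ω | X ω + U ω ≤ u ∧ Y ω + V ω ≤ v} := by
  intro u v
  have hW : Measurable fun ω => (U ω, V ω) := hU.prodMk hV
  have hZ : Measurable fun ω => (X ω, Y ω) := hX.prodMk hY
  set μU := Measure.map U ℙ with hμUdef
  set μV := Measure.map V ℙ with hμVdef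
  set μX := Measure.map X ℙ with hμXdef
  set μY := Measure.map Y ℙ with hμYdef
  set μW := Measure.map (fun ω => (U ω, V ω)) ℙ with hμWdef
  set μZ := Measure.map (fun ω => (X ω, Y ω)) ℙ with hμZdef
  have hWZ : Measure.map (fun ω => ((U ω, V ω), (X ω, Y ω))) ℙ = μW.prod μZ :=
    (indepFun_iff_map_prod_eq_prod_map_map hW.aemeasurable hZ.aemeasurable).mp hind
  have hμW : μW = μU.prod μV :=
    (indepFun_iff_map_prod_eq_prod_map_map hU.aemeasurable hV.aemeasurable).mp hUV
  have hUX : IndepFun U X ℙ := hind.comp measurable_fst measurable_fst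
  have hVY : IndepFun V Y ℙ := hind.comp measurable_snd measurable_snd
  have hUXmap : Measure.map (fun ω => (U ω, X ω)) ℙ = μU.prod μX :=
    (indepFun_iff_map_prod_eq_prod_map_map hU.aemeasurable hX.aemeasurable).mp hUX
  have hVYmap : Measure.map (fun ω => (V ω, Y ω)) ℙ = μV.prod μY :=
    (indepFun_iff_map_prod_eq_prod_map_map hV.aemeasurable hY.aemeasurable).mp hVY
  -- distribution functions
  set f : ℝ → ENNReal := fun s => μX (Set.Iic (u - s)) with hfdef
  set g : ℝ → ENNReal := fun t => μY (Set.Iic (v - t)) with hgdef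
  have hfmeas : Measurable f := by
    refine Antitone.measurable fun s t hst => ?_
    exact measure_mono (Set.Iic_subset_Iic.mpr (by linarith))
  have hgmeas : Measurable g := by
    refine Antitone.measurable fun s t hst => ?_
    exact measure_mono (Set.Iic_subset_Iic.mpr (by linarith))
  -- marginals
  have hfP : ∀ s : ℝ, f s = ℙ {ω | X ω ≤ u - s} := by
    intro s
    rw [hfdef]
    simp only [hμXdef]
    rw [Measure.map_apply hX measurableSet_Iic]
    rfl
  have hgP : ∀ t : ℝ, g t = ℙ {ω | Y ω ≤ v - t} := by
    intro t
    rw [hgdef]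
    simp only [hμYdef]
    rw [Measure.map_apply hY measurableSet_Iic]
    rfl
  -- X+U marginal
  have hXU : ℙ {ω | X ω + U ω ≤ u} = ∫⁻ s, f s ∂μU := by
    have hset : MeasurableSet {p : ℝ × ℝ | p.2 + p.1 ≤ u} :=
      measurableSet_le (measurable_snd.add measurable_fst) measurable_const
    have : ℙ {ω | X ω + U ω ≤ u}
        = Measure.map (fun ω => (U ω, X ω)) ℙ {p : ℝ × ℝ | p.2 + p.1 ≤ u} := by
      rw [Measure.map_apply (hU.prodMk hX) hset]; rfl
    rw [this, hUXmap, Measure.prod_apply hset]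
    refine lintegral_congr fun s => ?_
    congr 1
    ext x
    simp [Set.mem_Iic]
    constructor <;> intro h <;> linarith
  have hYV : ℙ {ω | Y ω + V ω ≤ v} = ∫⁻ t, g t ∂μV := by
    have hset : MeasurableSet {p : ℝ × ℝ | p.2 + p.1 ≤ v} :=
      measurableSet_le (measurable_snd.add measurable_fst) measurable_const
    have : ℙ {ω | Y ω + V ω ≤ v}
        = Measure.map (fun ω => (V ω, Y ω)) ℙ {p : ℝ × ℝ | p.2 + p.1 ≤ v} := by
      rw [Measure.map_apply (hV.prodMk hY) hset]; rfl
    rw [this, hVYmap, Measure.prod_apply hset]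
    refine lintegral_congr fun t => ?_
    congr 1
    ext x
    simp [Set.mem_Iic]
    constructor <;> intro h <;> linarith
  -- joint
  have hset2 : MeasurableSet {p : (ℝ × ℝ) × ℝ × ℝ | p.2.1 + p.1.1 ≤ u ∧ p.2.2 + p.1.2 ≤ v} := by
    apply MeasurableSet.inter
    · exact measurableSet_le (measurable_snd.fst.add measurable_fst.fst) measurable_const
    · exact measurableSet_le (measurable_snd.snd.add measurable_fst.snd) measurable_const
  have hjoint : ℙ {ω | X ω + U ω ≤ u ∧ Y ω + V ω ≤ v}
      = ∫⁻ p, μZ {q : ℝ × ℝ | q.1 + p.1 ≤ u ∧ q.2 + p.2 ≤ v} ∂μW := by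
    have : ℙ {ω | X ω + U ω ≤ u ∧ Y ω + V ω ≤ v}
        = Measure.map (fun ω => ((U ω, V ω), (X ω, Y ω))) ℙ
          {p : (ℝ × ℝ) × ℝ × ℝ | p.2.1 + p.1.1 ≤ u ∧ p.2.2 + p.1.2 ≤ v} := by
      rw [Measure.map_apply (hW.prodMk hZ) hset2]; rfl
    rw [this, hWZ, Measure.prod_apply hset2]
    rfl
  -- pointwise bound
  have hpt : ∀ p : ℝ × ℝ, f p.1 * g p.2 ≤ μZ {q : ℝ × ℝ | q.1 + p.1 ≤ u ∧ q.2 + p.2 ≤ v} := by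
    intro p
    have hsetq : MeasurableSet {q : ℝ × ℝ | q.1 + p.1 ≤ u ∧ q.2 + p.2 ≤ v} := by
      apply MeasurableSet.inter
      · exact measurableSet_le (measurable_fst.add measurable_const) measurable_const
      · exact measurableSet_le (measurable_snd.add measurable_const) measurable_const
    have hμZap : μZ {q : ℝ × ℝ | q.1 + p.1 ≤ u ∧ q.2 + p.2 ≤ v}
        = ℙ {ω | X ω ≤ u - p.1 ∧ Y ω ≤ v - p.2} := by
      simp only [hμZdef]
      rw [Measure.map_apply hZ hsetq]
      congr 1
      ext ω
      simp only [Set.mem_preimage, Set.mem_setOf_eq]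
      constructor <;> rintro ⟨h1, h2⟩ <;> constructor <;> linarith
    rw [hμZap, hfP, hgP]
    exact hPQD (u - p.1) (v - p.2)
  calc ℙ {ω | X ω + U ω ≤ u} * ℙ {ω | Y ω + V ω ≤ v}
      = (∫⁻ s, f s ∂μU) * ∫⁻ t, g t ∂μV := by rw [hXU, hYV]
    _ = ∫⁻ p, f p.1 * g p.2 ∂(μU.prod μV) :=
        (lintegral_prod_mul hfmeas.aemeasurable hgmeas.aemeasurable).symm
    _ = ∫⁻ p, f p.1 * g p.2 ∂μW := by rw [hμW]
    _ ≤ ∫⁻ p, μZ {q : ℝ × ℝ | q.1 + p.1 ≤ u ∧ q.2 + p.2 ≤ v} ∂μW :=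
        lintegral_mono fun p => hpt p
    _ = ℙ {ω | X ω + U ω ≤ u ∧ Y ω + V ω ≤ v} := hjoint.symm
end

section
/- Let X, Y be nonnegative integer-valued random variables with joint pmf h, marginal CDFs F, G and pmfs f, g, and define Spearman's rho as ρ^S(X,Y) = 3(P(C) − P(D)) where P(C) = P((X1−X2)(Y1−Y3)>0) and P(D) = P((X1−X2)(Y1−Y3)<0) for independent copies (X1,Y1),(X2,Y2),(X3,Y3). Then ρ^S(X,Y) = 6 Σ_x Σ_y h(x,y)·[(1−F(x))(1−G(y)) + F(x−1)G(y−1) − (1/2) f(x)g(y)] + 3 Σ_x (f(x)² + g(x)²) − 3. -/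
open MeasureTheory ProbabilityTheory

private lemma decomp_fiber {Ω : Type*} [MeasureSpace Ω] {α β : Type*} [MeasurableSpace α]
    [MeasurableSpace β] [Countable α] [MeasurableSingletonClass α]
    (W : Ω → α) (Z : Ω → β) (hW : Measurable W) (hZ : Measurable Z)
    (Q : α → β → Prop) (hQ : ∀ a, MeasurableSet {b | Q a b}) :
    ℙ {ω | Q (W ω) (Z ω)} = ∑' a, ℙ (W ⁻¹' {a} ∩ Z ⁻¹' {b | Q a b}) := by
  have hset : {ω | Q (W ω) (Z ω)} = ⋃ a, W ⁻¹' {a} ∩ Z ⁻¹' {b | Q a b} := by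
    ext ω
    simp only [Set.mem_setOf_eq, Set.mem_iUnion, Set.mem_inter_iff, Set.mem_preimage,
      Set.mem_singleton_iff]
    exact ⟨fun h => ⟨W ω, rfl, h⟩, fun ⟨a, ha, hq⟩ => by rw [ha]; exact hq⟩
  rw [hset, measure_iUnion]
  · intro a a' haa'
    simp only [Function.onFun, Set.disjoint_left]
    rintro ω ⟨h1, -⟩ ⟨h2, -⟩
    exact haa' (h1.symm.trans h2)
  · exact fun a => (hW (measurableSet_singleton a)).inter (hZ (hQ a))

private lemma fiber_fst {Ω : Type*} [MeasureSpace Ω] {α β : Type*} [MeasurableSpace α]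
    [MeasurableSpace β] [Countable β] [MeasurableSingletonClass α] [MeasurableSingletonClass β]
    (W : Ω → α × β) (hW : Measurable W) (a : α) :
    ∑' b, ℙ (W ⁻¹' {(a, b)}) = ℙ {ω | (W ω).1 = a} := by
  rw [← measure_iUnion]
  · congr 1
    ext ω
    simp [Prod.ext_iff, eq_comm]
  · intro b b' hbb'
    simp only [Function.onFun, Set.disjoint_left, Set.mem_preimage, Set.mem_singleton_iff]
    rintro ω h1 h2
    exact hbb' (by rw [h1] at h2; exact (Prod.mk.injEq _ _ _ _).mp h2 |>.2)
  · exact fun b => hW (measurableSet_singleton _)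

private lemma fiber_snd {Ω : Type*} [MeasureSpace Ω] {α β : Type*} [MeasurableSpace α]
    [MeasurableSpace β] [Countable α] [MeasurableSingletonClass α] [MeasurableSingletonClass β]
    (W : Ω → α × β) (hW : Measurable W) (b : β) :
    ∑' a, ℙ (W ⁻¹' {(a, b)}) = ℙ {ω | (W ω).2 = b} := by
  rw [← measure_iUnion]
  · congr 1
    ext ω
    simp [Prod.ext_iff, eq_comm]
  · intro a a' haa'
    simp only [Function.onFun, Set.disjoint_left, Set.mem_preimage, Set.mem_singleton_iff]
    rintro ω h1 h2
    exact haa' (by rw [h1] at h2; exact (Prod.mk.injEq _ _ _ _).mp h2 |>.1)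
  · exact fun a => hW (measurableSet_singleton _)

private lemma fiber_total {Ω : Type*} [MeasureSpace Ω] [IsProbabilityMeasure (ℙ : Measure Ω)]
    {α : Type*} [MeasurableSpace α] [Countable α] [MeasurableSingletonClass α]
    (W : Ω → α) (hW : Measurable W) :
    ∑' a, ℙ (W ⁻¹' {a}) = 1 := by
  rw [← measure_iUnion]
  · have : ⋃ a, W ⁻¹' {a} = Set.univ := by
      ext ω; simp
    rw [this, measure_univ]
  · intro a a' haa'
    simp only [Function.onFun, Set.disjoint_left, Set.mem_preimage, Set.mem_singleton_iff]
    exact fun ω h1 h2 => haa' (h1.symm.trans h2)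
  · exact fun a => hW (measurableSet_singleton _)

private lemma key_event {Ω : Type*} [MeasureSpace Ω] [IsProbabilityMeasure (ℙ : Measure Ω)]
    (XY : Fin 3 → Ω → ℕ × ℕ) (hm : ∀ i, Measurable (XY i))
    (hindep : iIndepFun XY ℙ)
    (hid : ∀ i, IdentDistrib (XY i) (XY 0) ℙ ℙ)
    (E : ℕ × ℕ → ℕ × ℕ → Prop)
    (u₁ v₁ u₂ v₂ : ℕ × ℕ → Set ℕ)
    (hE : ∀ p, {q : ℕ × ℕ | E p q} = (u₁ p ×ˢ v₁ p) ∪ (u₂ p ×ˢ v₂ p))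
    (hdisj : ∀ p, Disjoint (u₁ p) (u₂ p)) :
    ℙ {ω | E (XY 0 ω) ((XY 1 ω).1, (XY 2 ω).2)}
      = ∑' p : ℕ × ℕ, ℙ (XY 0 ⁻¹' {p}) *
          (ℙ {ω | (XY 0 ω).1 ∈ u₁ p} * ℙ {ω | (XY 0 ω).2 ∈ v₁ p}
           + ℙ {ω | (XY 0 ω).1 ∈ u₂ p} * ℙ {ω | (XY 0 ω).2 ∈ v₂ p}) := by
  have hZmeas : Measurable (fun ω => ((XY 1 ω).1, (XY 2 ω).2)) :=
    (measurable_fst.comp (hm 1)).prodMk (measurable_snd.comp (hm 2))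
  have hindep1 : IndepFun (fun ω => ((XY 1 ω).1, (XY 2 ω).2)) (XY 0) ℙ := by
    have base : IndepFun (fun ω => (XY 1 ω, XY 2 ω)) (XY 0) ℙ :=
      hindep.indepFun_prodMk hm 1 2 0 (by decide) (by decide)
    have := base.comp (φ := fun q : (ℕ × ℕ) × (ℕ × ℕ) => (q.1.1, q.2.2)) (ψ := id)
      ((measurable_fst.comp measurable_fst).prodMk (measurable_snd.comp measurable_snd))
      measurable_id
    exact this
  have hindep2 : IndepFun (fun ω => (XY 1 ω).1) (fun ω => (XY 2 ω).2) ℙ :=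
    (hindep.indepFun (show (1 : Fin 3) ≠ 2 by decide)).comp measurable_fst measurable_snd
  have idX : IdentDistrib (fun ω => (XY 1 ω).1) (fun ω => (XY 0 ω).1) ℙ ℙ :=
    (hid 1).comp measurable_fst
  have idY : IdentDistrib (fun ω => (XY 2 ω).2) (fun ω => (XY 0 ω).2) ℙ ℙ :=
    (hid 2).comp measurable_snd
  have hprod : ∀ (s t : Set ℕ),
      ℙ ((fun ω => ((XY 1 ω).1, (XY 2 ω).2)) ⁻¹' (s ×ˢ t))
        = ℙ {ω | (XY 0 ω).1 ∈ s} * ℙ {ω | (XY 0 ω).2 ∈ t} := by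
    intro s t
    rw [Set.mk_preimage_prod]
    rw [hindep2.measure_inter_preimage_eq_mul _ _ (s.to_countable.measurableSet)
      (t.to_countable.measurableSet)]
    rw [idX.measure_mem_eq (s.to_countable.measurableSet),
        idY.measure_mem_eq (t.to_countable.measurableSet)]
    rfl
  rw [decomp_fiber (XY 0) (fun ω => ((XY 1 ω).1, (XY 2 ω).2)) (hm 0) hZmeas E
    (fun a => (Set.to_countable _).measurableSet)]
  refine tsum_congr fun p => ?_
  rw [Set.inter_comm,
    hindep1.measure_inter_preimage_eq_mul _ _ ((Set.to_countable _).measurableSet)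
      (measurableSet_singleton p),
    mul_comm, hE p, Set.preimage_union, measure_union, hprod, hprod]
  · exact Set.disjoint_left.mpr (fun ω hω hω' => by
      rcases hω with ⟨h1, -⟩
      rcases hω' with ⟨h2, -⟩
      exact Set.disjoint_left.mp (hdisj p) h1 h2)
  · exact hZmeas ((Set.to_countable _).measurableSet)

theorem stmt13 {Ω : Type*} [MeasureSpace Ω] [IsProbabilityMeasure (ℙ : Measure Ω)]
    (XY : Fin 3 → Ω → ℕ × ℕ) (hm : ∀ i, Measurable (XY i))
    (hindep : iIndepFun XY ℙ)
    (hid : ∀ i, IdentDistrib (XY i) (XY 0) ℙ ℙ)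
    -- marginal CDFs, left limits, and pmfs of (X,Y) = XY 0
    (F G Fm Gm f g : ℕ → ℝ) (h : ℕ → ℕ → ℝ)
    (hF : ∀ x, F x = (ℙ {ω | (XY 0 ω).1 ≤ x}).toReal)
    (hG : ∀ y, G y = (ℙ {ω | (XY 0 ω).2 ≤ y}).toReal)
    (hFm : ∀ x, Fm x = (ℙ {ω | (XY 0 ω).1 < x}).toReal)
    (hGm : ∀ y, Gm y = (ℙ {ω | (XY 0 ω).2 < y}).toReal)
    (hf : ∀ x, f x = (ℙ {ω | (XY 0 ω).1 = x}).toReal)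
    (hg : ∀ y, g y = (ℙ {ω | (XY 0 ω).2 = y}).toReal)
    (hh : ∀ x y, h x y = (ℙ {ω | (XY 0 ω).1 = x ∧ (XY 0 ω).2 = y}).toReal)
    -- Spearman's rho, defined from concordance and discordance probabilities
    (ρ : ℝ)
    (hρ : ρ = 3 * ((ℙ {ω | (((XY 0 ω).1 : ℤ) - ((XY 1 ω).1 : ℤ)) *
                            (((XY 0 ω).2 : ℤ) - ((XY 2 ω).2 : ℤ)) > 0}).toReal
                   - (ℙ {ω | (((XY 0 ω).1 : ℤ) - ((XY 1 ω).1 : ℤ)) *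
                            (((XY 0 ω).2 : ℤ) - ((XY 2 ω).2 : ℤ)) < 0}).toReal)) :
    ρ = 6 * ∑' (x : ℕ) (y : ℕ),
            h x y * ((1 - F x) * (1 - G y) + Fm x * Gm y - (1 / 2) * f x * g y)
        + 3 * ∑' x : ℕ, (f x ^ 2 + g x ^ 2) - 3 := by
  -- ENNReal-level key identities
  have keyC : ℙ {ω | (((XY 0 ω).1 : ℤ) - ((XY 1 ω).1 : ℤ)) *
        (((XY 0 ω).2 : ℤ) - ((XY 2 ω).2 : ℤ)) > 0}
      = ∑' p : ℕ × ℕ, ℙ (XY 0 ⁻¹' {p}) *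
          (ℙ {ω | (XY 0 ω).1 < p.1} * ℙ {ω | (XY 0 ω).2 < p.2}
           + ℙ {ω | p.1 < (XY 0 ω).1} * ℙ {ω | p.2 < (XY 0 ω).2}) := by
    exact key_event XY hm hindep hid
      (fun p q => ((p.1 : ℤ) - (q.1 : ℤ)) * ((p.2 : ℤ) - (q.2 : ℤ)) > 0)
      (fun p => {u | u < p.1}) (fun p => {v | v < p.2})
      (fun p => {u | p.1 < u}) (fun p => {v | p.2 < v})
      (fun p => by
        ext q
        simp only [Set.mem_setOf_eq, Set.mem_union, Set.mem_prod, gt_iff_lt, mul_pos_iff,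
          sub_pos, sub_neg]
        omega)
      (fun p => Set.disjoint_left.mpr (fun u h1 h2 => by
        simp only [Set.mem_setOf_eq] at h1 h2; omega))
  have keyD : ℙ {ω | (((XY 0 ω).1 : ℤ) - ((XY 1 ω).1 : ℤ)) *
        (((XY 0 ω).2 : ℤ) - ((XY 2 ω).2 : ℤ)) < 0}
      = ∑' p : ℕ × ℕ, ℙ (XY 0 ⁻¹' {p}) *
          (ℙ {ω | (XY 0 ω).1 < p.1} * ℙ {ω | p.2 < (XY 0 ω).2}
           + ℙ {ω | p.1 < (XY 0 ω).1} * ℙ {ω | (XY 0 ω).2 < p.2}) := by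
    exact key_event XY hm hindep hid
      (fun p q => ((p.1 : ℤ) - (q.1 : ℤ)) * ((p.2 : ℤ) - (q.2 : ℤ)) < 0)
      (fun p => {u | u < p.1}) (fun p => {v | p.2 < v})
      (fun p => {u | p.1 < u}) (fun p => {v | v < p.2})
      (fun p => by
        ext q
        simp only [Set.mem_setOf_eq, Set.mem_union, Set.mem_prod, mul_neg_iff,
          sub_pos, sub_neg]
        omega)
      (fun p => Set.disjoint_left.mpr (fun u h1 h2 => by
        simp only [Set.mem_setOf_eq] at h1 h2; omega))
  -- pointwise real value facts
  have hμ0 : ∀ p : ℕ × ℕ, (ℙ (XY 0 ⁻¹' {p})).toReal = h p.1 p.2 := by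
    intro p
    rw [hh]
    congr 2
    ext ω
    simp [Prod.ext_iff]
  have hgtF : ∀ x : ℕ, (ℙ {ω | x < (XY 0 ω).1}).toReal = 1 - F x := by
    intro x
    have hset : {ω | x < (XY 0 ω).1} = {ω | (XY 0 ω).1 ≤ x}ᶜ := by
      ext ω; simp [not_le]
    rw [hset, prob_compl_eq_one_sub
        (show MeasurableSet {ω | (XY 0 ω).1 ≤ x} from
          (measurable_fst.comp (hm 0)) measurableSet_Iic),
      ENNReal.toReal_sub_of_le prob_le_one ENNReal.one_ne_top, ENNReal.toReal_one, hF]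
  have hgtG : ∀ y : ℕ, (ℙ {ω | y < (XY 0 ω).2}).toReal = 1 - G y := by
    intro y
    have hset : {ω | y < (XY 0 ω).2} = {ω | (XY 0 ω).2 ≤ y}ᶜ := by
      ext ω; simp [not_le]
    rw [hset, prob_compl_eq_one_sub
        (show MeasurableSet {ω | (XY 0 ω).2 ≤ y} from
          (measurable_snd.comp (hm 0)) measurableSet_Iic),
      ENNReal.toReal_sub_of_le prob_le_one ENNReal.one_ne_top, ENNReal.toReal_one, hG]
  have mfin : ∀ s : Set Ω, ℙ s ≠ ⊤ := fun s => measure_ne_top _ _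
  -- pointwise toReal computations
  have ptC : ∀ p : ℕ × ℕ,
      (ℙ (XY 0 ⁻¹' {p}) *
        (ℙ {ω | (XY 0 ω).1 < p.1} * ℙ {ω | (XY 0 ω).2 < p.2}
         + ℙ {ω | p.1 < (XY 0 ω).1} * ℙ {ω | p.2 < (XY 0 ω).2})).toReal
      = h p.1 p.2 * (Fm p.1 * Gm p.2 + (1 - F p.1) * (1 - G p.2)) := by
    intro p
    rw [ENNReal.toReal_mul,
      ENNReal.toReal_add (ENNReal.mul_ne_top (mfin _) (mfin _)) (ENNReal.mul_ne_top (mfin _) (mfin _)),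
      ENNReal.toReal_mul, ENNReal.toReal_mul, hμ0, ← hFm, ← hGm, hgtF, hgtG]
  have ptD : ∀ p : ℕ × ℕ,
      (ℙ (XY 0 ⁻¹' {p}) *
        (ℙ {ω | (XY 0 ω).1 < p.1} * ℙ {ω | p.2 < (XY 0 ω).2}
         + ℙ {ω | p.1 < (XY 0 ω).1} * ℙ {ω | (XY 0 ω).2 < p.2})).toReal
      = h p.1 p.2 * (Fm p.1 * (1 - G p.2) + (1 - F p.1) * Gm p.2) := by
    intro p
    rw [ENNReal.toReal_mul,
      ENNReal.toReal_add (ENNReal.mul_ne_top (mfin _) (mfin _)) (ENNReal.mul_ne_top (mfin _) (mfin _)),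
      ENNReal.toReal_mul, ENNReal.toReal_mul, hμ0, ← hFm, ← hGm, hgtF, hgtG]
  have tfinC : ∀ p : ℕ × ℕ,
      ℙ (XY 0 ⁻¹' {p}) *
        (ℙ {ω | (XY 0 ω).1 < p.1} * ℙ {ω | (XY 0 ω).2 < p.2}
         + ℙ {ω | p.1 < (XY 0 ω).1} * ℙ {ω | p.2 < (XY 0 ω).2}) ≠ ⊤ :=
    fun p => ENNReal.mul_ne_top (mfin _) (ENNReal.add_ne_top.mpr
      ⟨ENNReal.mul_ne_top (mfin _) (mfin _), ENNReal.mul_ne_top (mfin _) (mfin _)⟩)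
  have tfinD : ∀ p : ℕ × ℕ,
      ℙ (XY 0 ⁻¹' {p}) *
        (ℙ {ω | (XY 0 ω).1 < p.1} * ℙ {ω | p.2 < (XY 0 ω).2}
         + ℙ {ω | p.1 < (XY 0 ω).1} * ℙ {ω | (XY 0 ω).2 < p.2}) ≠ ⊤ :=
    fun p => ENNReal.mul_ne_top (mfin _) (ENNReal.add_ne_top.mpr
      ⟨ENNReal.mul_ne_top (mfin _) (mfin _), ENNReal.mul_ne_top (mfin _) (mfin _)⟩)
  -- real sums for C and D
  have SumC : Summable (fun p : ℕ × ℕ =>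
      h p.1 p.2 * (Fm p.1 * Gm p.2 + (1 - F p.1) * (1 - G p.2))) := by
    refine (ENNReal.summable_toReal ?_).congr ptC
    rw [← keyC]; exact mfin _
  have SumD : Summable (fun p : ℕ × ℕ =>
      h p.1 p.2 * (Fm p.1 * (1 - G p.2) + (1 - F p.1) * Gm p.2)) := by
    refine (ENNReal.summable_toReal ?_).congr ptD
    rw [← keyD]; exact mfin _
  have PCreal : (ℙ {ω | (((XY 0 ω).1 : ℤ) - ((XY 1 ω).1 : ℤ)) *
        (((XY 0 ω).2 : ℤ) - ((XY 2 ω).2 : ℤ)) > 0}).toReal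
      = ∑' p : ℕ × ℕ, h p.1 p.2 * (Fm p.1 * Gm p.2 + (1 - F p.1) * (1 - G p.2)) := by
    rw [keyC, ENNReal.tsum_toReal_eq tfinC]
    exact tsum_congr ptC
  have PDreal : (ℙ {ω | (((XY 0 ω).1 : ℤ) - ((XY 1 ω).1 : ℤ)) *
        (((XY 0 ω).2 : ℤ) - ((XY 2 ω).2 : ℤ)) < 0}).toReal
      = ∑' p : ℕ × ℕ, h p.1 p.2 * (Fm p.1 * (1 - G p.2) + (1 - F p.1) * Gm p.2) := by
    rw [keyD, ENNReal.tsum_toReal_eq tfinD]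
    exact tsum_congr ptD
  -- total mass of h
  have EH : ∑' p : ℕ × ℕ, ℙ (XY 0 ⁻¹' {p}) = 1 := fiber_total (XY 0) (hm 0)
  have Sumh : Summable (fun p : ℕ × ℕ => h p.1 p.2) := by
    refine (ENNReal.summable_toReal ?_).congr hμ0
    rw [EH]; exact ENNReal.one_ne_top
  have tsumh : ∑' p : ℕ × ℕ, h p.1 p.2 = 1 := by
    calc ∑' p : ℕ × ℕ, h p.1 p.2 = ∑' p : ℕ × ℕ, (ℙ (XY 0 ⁻¹' {p})).toReal :=
          tsum_congr fun p => (hμ0 p).symm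
      _ = (∑' p : ℕ × ℕ, ℙ (XY 0 ⁻¹' {p})).toReal :=
          (ENNReal.tsum_toReal_eq fun p => mfin _).symm
      _ = 1 := by rw [EH]; exact ENNReal.toReal_one
  -- marginal identities (ENNReal level)
  have Ef : ∑' p : ℕ × ℕ, ℙ (XY 0 ⁻¹' {p}) * ℙ {ω | (XY 0 ω).1 = p.1}
      = ∑' x : ℕ, ℙ {ω | (XY 0 ω).1 = x} * ℙ {ω | (XY 0 ω).1 = x} := by
    rw [ENNReal.tsum_prod']
    refine tsum_congr fun x => ?_
    show ∑' b : ℕ, ℙ (XY 0 ⁻¹' {(x, b)}) * ℙ {ω | (XY 0 ω).1 = x} = _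
    rw [ENNReal.tsum_mul_right, fiber_fst (XY 0) (hm 0) x]
  have Eg : ∑' p : ℕ × ℕ, ℙ (XY 0 ⁻¹' {p}) * ℙ {ω | (XY 0 ω).2 = p.2}
      = ∑' y : ℕ, ℙ {ω | (XY 0 ω).2 = y} * ℙ {ω | (XY 0 ω).2 = y} := by
    rw [ENNReal.tsum_prod', ENNReal.tsum_comm]
    refine tsum_congr fun y => ?_
    show ∑' a : ℕ, ℙ (XY 0 ⁻¹' {(a, y)}) * ℙ {ω | (XY 0 ω).2 = y} = _
    rw [ENNReal.tsum_mul_right, fiber_snd (XY 0) (hm 0) y]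
  have hfinf : (∑' p : ℕ × ℕ, ℙ (XY 0 ⁻¹' {p}) * ℙ {ω | (XY 0 ω).1 = p.1}) ≠ ⊤ := by
    have hle : (∑' p : ℕ × ℕ, ℙ (XY 0 ⁻¹' {p}) * ℙ {ω | (XY 0 ω).1 = p.1})
        ≤ ∑' p : ℕ × ℕ, ℙ (XY 0 ⁻¹' {p}) := by
      refine ENNReal.tsum_le_tsum fun p => ?_
      calc ℙ (XY 0 ⁻¹' {p}) * ℙ {ω | (XY 0 ω).1 = p.1}
          ≤ ℙ (XY 0 ⁻¹' {p}) * 1 := mul_le_mul_right prob_le_one _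
        _ = ℙ (XY 0 ⁻¹' {p}) := mul_one _
    rw [EH] at hle
    exact (hle.trans_lt ENNReal.one_lt_top).ne
  have hfing : (∑' p : ℕ × ℕ, ℙ (XY 0 ⁻¹' {p}) * ℙ {ω | (XY 0 ω).2 = p.2}) ≠ ⊤ := by
    have hle : (∑' p : ℕ × ℕ, ℙ (XY 0 ⁻¹' {p}) * ℙ {ω | (XY 0 ω).2 = p.2})
        ≤ ∑' p : ℕ × ℕ, ℙ (XY 0 ⁻¹' {p}) := by
      refine ENNReal.tsum_le_tsum fun p => ?_
      calc ℙ (XY 0 ⁻¹' {p}) * ℙ {ω | (XY 0 ω).2 = p.2}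
          ≤ ℙ (XY 0 ⁻¹' {p}) * 1 := mul_le_mul_right prob_le_one _
        _ = ℙ (XY 0 ⁻¹' {p}) := mul_one _
    rw [EH] at hle
    exact (hle.trans_lt ENNReal.one_lt_top).ne
  have hfinf2 : (∑' x : ℕ, ℙ {ω | (XY 0 ω).1 = x} * ℙ {ω | (XY 0 ω).1 = x}) ≠ ⊤ := by
    rw [← Ef]; exact hfinf
  have hfing2 : (∑' y : ℕ, ℙ {ω | (XY 0 ω).2 = y} * ℙ {ω | (XY 0 ω).2 = y}) ≠ ⊤ := by
    rw [← Eg]; exact hfing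
  -- real versions
  have ptf : ∀ p : ℕ × ℕ, (ℙ (XY 0 ⁻¹' {p}) * ℙ {ω | (XY 0 ω).1 = p.1}).toReal
      = h p.1 p.2 * f p.1 := by
    intro p; rw [ENNReal.toReal_mul, hμ0, ← hf]
  have ptg : ∀ p : ℕ × ℕ, (ℙ (XY 0 ⁻¹' {p}) * ℙ {ω | (XY 0 ω).2 = p.2}).toReal
      = h p.1 p.2 * g p.2 := by
    intro p; rw [ENNReal.toReal_mul, hμ0, ← hg]
  have Sumhf : Summable (fun p : ℕ × ℕ => h p.1 p.2 * f p.1) :=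
    (ENNReal.summable_toReal hfinf).congr ptf
  have Sumhg : Summable (fun p : ℕ × ℕ => h p.1 p.2 * g p.2) :=
    (ENNReal.summable_toReal hfing).congr ptg
  have Sf2 : Summable (fun x : ℕ => f x ^ 2) :=
    (ENNReal.summable_toReal hfinf2).congr fun x => by
      rw [ENNReal.toReal_mul, ← hf, sq]
  have Sg2 : Summable (fun y : ℕ => g y ^ 2) :=
    (ENNReal.summable_toReal hfing2).congr fun y => by
      rw [ENNReal.toReal_mul, ← hg, sq]
  have tsumhf : ∑' p : ℕ × ℕ, h p.1 p.2 * f p.1 = ∑' x : ℕ, f x ^ 2 := by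
    calc ∑' p : ℕ × ℕ, h p.1 p.2 * f p.1
        = ∑' p : ℕ × ℕ, (ℙ (XY 0 ⁻¹' {p}) * ℙ {ω | (XY 0 ω).1 = p.1}).toReal :=
          tsum_congr fun p => (ptf p).symm
      _ = (∑' p : ℕ × ℕ, ℙ (XY 0 ⁻¹' {p}) * ℙ {ω | (XY 0 ω).1 = p.1}).toReal :=
          (ENNReal.tsum_toReal_eq fun p => ENNReal.mul_ne_top (mfin _) (mfin _)).symm
      _ = (∑' x : ℕ, ℙ {ω | (XY 0 ω).1 = x} * ℙ {ω | (XY 0 ω).1 = x}).toReal := by rw [Ef]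
      _ = ∑' x : ℕ, (ℙ {ω | (XY 0 ω).1 = x} * ℙ {ω | (XY 0 ω).1 = x}).toReal :=
          ENNReal.tsum_toReal_eq fun x => ENNReal.mul_ne_top (mfin _) (mfin _)
      _ = ∑' x : ℕ, f x ^ 2 := tsum_congr fun x => by rw [ENNReal.toReal_mul, ← hf, sq]
  have tsumhg : ∑' p : ℕ × ℕ, h p.1 p.2 * g p.2 = ∑' y : ℕ, g y ^ 2 := by
    calc ∑' p : ℕ × ℕ, h p.1 p.2 * g p.2
        = ∑' p : ℕ × ℕ, (ℙ (XY 0 ⁻¹' {p}) * ℙ {ω | (XY 0 ω).2 = p.2}).toReal :=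
          tsum_congr fun p => (ptg p).symm
      _ = (∑' p : ℕ × ℕ, ℙ (XY 0 ⁻¹' {p}) * ℙ {ω | (XY 0 ω).2 = p.2}).toReal :=
          (ENNReal.tsum_toReal_eq fun p => ENNReal.mul_ne_top (mfin _) (mfin _)).symm
      _ = (∑' y : ℕ, ℙ {ω | (XY 0 ω).2 = y} * ℙ {ω | (XY 0 ω).2 = y}).toReal := by rw [Eg]
      _ = ∑' y : ℕ, (ℙ {ω | (XY 0 ω).2 = y} * ℙ {ω | (XY 0 ω).2 = y}).toReal :=
          ENNReal.tsum_toReal_eq fun y => ENNReal.mul_ne_top (mfin _) (mfin _)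
      _ = ∑' y : ℕ, g y ^ 2 := tsum_congr fun y => by rw [ENNReal.toReal_mul, ← hg, sq]
  -- F = Fm + f, G = Gm + g
  have hFsplit : ∀ x, F x = Fm x + f x := by
    intro x
    rw [hF, hFm, hf,
      ← ENNReal.toReal_add (mfin _) (mfin _)]
    congr 1
    rw [← measure_union]
    · congr 1
      ext ω
      simp only [Set.mem_union, Set.mem_setOf_eq]
      omega
    · exact Set.disjoint_left.mpr fun ω h1 h2 => by
        simp only [Set.mem_setOf_eq] at h1 h2; omega
    · exact (measurable_fst.comp (hm 0)) (measurableSet_singleton x)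
  have hGsplit : ∀ y, G y = Gm y + g y := by
    intro y
    rw [hG, hGm, hg,
      ← ENNReal.toReal_add (mfin _) (mfin _)]
    congr 1
    rw [← measure_union]
    · congr 1
      ext ω
      simp only [Set.mem_union, Set.mem_setOf_eq]
      omega
    · exact Set.disjoint_left.mpr fun ω h1 h2 => by
        simp only [Set.mem_setOf_eq] at h1 h2; omega
    · exact (measurable_snd.comp (hm 0)) (measurableSet_singleton y)
  -- pointwise algebraic identity
  have ptA : ∀ p : ℕ × ℕ,
      (h p.1 p.2 * (Fm p.1 * Gm p.2 + (1 - F p.1) * (1 - G p.2))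
        - h p.1 p.2 * (Fm p.1 * (1 - G p.2) + (1 - F p.1) * Gm p.2)
        + h p.1 p.2 - h p.1 p.2 * f p.1 - h p.1 p.2 * g p.2) / 2
      = h p.1 p.2 * ((1 - F p.1) * (1 - G p.2) + Fm p.1 * Gm p.2
          - 1 / 2 * f p.1 * g p.2) := by
    intro p
    rw [hFsplit p.1, hGsplit p.2]
    ring
  have SA : Summable (fun p : ℕ × ℕ =>
      h p.1 p.2 * ((1 - F p.1) * (1 - G p.2) + Fm p.1 * Gm p.2 - 1 / 2 * f p.1 * g p.2)) :=
    (((((SumC.sub SumD).add Sumh).sub Sumhf).sub Sumhg).div_const 2).congr ptA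
  have TA : ∑' (x : ℕ) (y : ℕ),
      h x y * ((1 - F x) * (1 - G y) + Fm x * Gm y - 1 / 2 * f x * g y)
      = ((∑' p : ℕ × ℕ, h p.1 p.2 * (Fm p.1 * Gm p.2 + (1 - F p.1) * (1 - G p.2)))
          - (∑' p : ℕ × ℕ, h p.1 p.2 * (Fm p.1 * (1 - G p.2) + (1 - F p.1) * Gm p.2))
          + 1 - (∑' x : ℕ, f x ^ 2) - (∑' y : ℕ, g y ^ 2)) / 2 := by
    rw [← Summable.tsum_prod' SA (fun x => SA.prod_factor x)]
    calc ∑' p : ℕ × ℕ, h p.1 p.2 * ((1 - F p.1) * (1 - G p.2) + Fm p.1 * Gm p.2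
            - 1 / 2 * f p.1 * g p.2)
        = ∑' p : ℕ × ℕ, (h p.1 p.2 * (Fm p.1 * Gm p.2 + (1 - F p.1) * (1 - G p.2))
            - h p.1 p.2 * (Fm p.1 * (1 - G p.2) + (1 - F p.1) * Gm p.2)
            + h p.1 p.2 - h p.1 p.2 * f p.1 - h p.1 p.2 * g p.2) / 2 :=
          tsum_congr fun p => (ptA p).symm
      _ = (∑' p : ℕ × ℕ, (h p.1 p.2 * (Fm p.1 * Gm p.2 + (1 - F p.1) * (1 - G p.2))
            - h p.1 p.2 * (Fm p.1 * (1 - G p.2) + (1 - F p.1) * Gm p.2)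
            + h p.1 p.2 - h p.1 p.2 * f p.1 - h p.1 p.2 * g p.2)) / 2 := tsum_div_const
      _ = _ := by
          rw [Summable.tsum_sub (((SumC.sub SumD).add Sumh).sub Sumhf) Sumhg,
            Summable.tsum_sub ((SumC.sub SumD).add Sumh) Sumhf,
            Summable.tsum_add (SumC.sub SumD) Sumh,
            Summable.tsum_sub SumC SumD, tsumh, tsumhf, tsumhg]
  have goal2 : ∑' x : ℕ, (f x ^ 2 + g x ^ 2) = (∑' x : ℕ, f x ^ 2) + (∑' y : ℕ, g y ^ 2) :=
    Summable.tsum_add Sf2 Sg2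
  rw [hρ, PCreal, PDreal, TA, goal2]
  ring
end

section
/- Let X, Y be Bernoulli random variables with success probabilities p_X, p_Y coupled by a copula C. Then Spearman's rho equals ρ^S(X,Y) = −3 + 3 C(1−p_X, 1−p_Y) + 3 p_X + 3 p_Y − 3 p_X p_Y. -/
/-- A bivariate copula: grounded, with uniform margins, and 2-increasing on [0,1]². -/
structure IsCopula (C : ℝ → ℝ → ℝ) : Prop where
  grounded_left : ∀ v ∈ Set.Icc (0 : ℝ) 1, C 0 v = 0
  grounded_right : ∀ u ∈ Set.Icc (0 : ℝ) 1, C u 0 = 0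
  margin_left : ∀ u ∈ Set.Icc (0 : ℝ) 1, C u 1 = u
  margin_right : ∀ v ∈ Set.Icc (0 : ℝ) 1, C 1 v = v
  twoIncreasing : ∀ u1 u2 v1 v2 : ℝ, u1 ∈ Set.Icc (0 : ℝ) 1 → u2 ∈ Set.Icc (0 : ℝ) 1 →
    v1 ∈ Set.Icc (0 : ℝ) 1 → v2 ∈ Set.Icc (0 : ℝ) 1 → u1 ≤ u2 → v1 ≤ v2 →
    0 ≤ C u2 v2 - C u1 v2 - C u2 v1 + C u1 v1

theorem stmt16 (C : ℝ → ℝ → ℝ) (hC : IsCopula C)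
    (pX pY : ℝ) (hpX : pX ∈ Set.Icc (0 : ℝ) 1) (hpY : pY ∈ Set.Icc (0 : ℝ) 1)
    -- Bernoulli marginal CDFs and pmfs
    (F G f g : ℤ → ℝ)
    (hFneg : ∀ x : ℤ, x < 0 → F x = 0) (hF0 : F 0 = 1 - pX) (hF1 : ∀ x : ℤ, 1 ≤ x → F x = 1)
    (hGneg : ∀ y : ℤ, y < 0 → G y = 0) (hG0 : G 0 = 1 - pY) (hG1 : ∀ y : ℤ, 1 ≤ y → G y = 1)
    (hf : ∀ x : ℤ, f x = F x - F (x - 1)) (hg : ∀ y : ℤ, g y = G y - G (y - 1))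
    -- joint pmf induced by the copula
    (h : ℤ → ℤ → ℝ)
    (hh : ∀ x y : ℤ, h x y =
      C (F x) (G y) - C (F (x - 1)) (G y) - C (F x) (G (y - 1)) + C (F (x - 1)) (G (y - 1)))
    -- Spearman's rho given by the discrete copula formula
    (ρ : ℝ)
    (hρ : ρ = 6 * ∑' (x : ℕ) (y : ℕ),
            h (x : ℤ) (y : ℤ) * ((1 - F x) * (1 - G y) + F ((x : ℤ) - 1) * G ((y : ℤ) - 1)
              - (1 / 2) * f x * g y)
          + 3 * ∑' x : ℕ, (f x ^ 2 + g x ^ 2) - 3) :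
    ρ = -3 + 3 * C (1 - pX) (1 - pY) + 3 * pX + 3 * pY - 3 * pX * pY := by

  -- basic values
  have hFm1 : F (-1) = 0 := hFneg _ (by norm_num)
  have hGm1 : G (-1) = 0 := hGneg _ (by norm_num)
  have hF1' : F 1 = 1 := hF1 1 le_rfl
  have hG1' : G 1 = 1 := hG1 1 le_rfl
  have hqX : (1 - pX) ∈ Set.Icc (0:ℝ) 1 := ⟨by linarith [hpX.2], by linarith [hpX.1]⟩
  have hqY : (1 - pY) ∈ Set.Icc (0:ℝ) 1 := ⟨by linarith [hpY.2], by linarith [hpY.1]⟩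
  have h01 : (0:ℝ) ∈ Set.Icc (0:ℝ) 1 := by norm_num
  have h11 : (1:ℝ) ∈ Set.Icc (0:ℝ) 1 := by norm_num
  -- values of h
  have h00 : h 0 0 = C (1 - pX) (1 - pY) := by
    rw [hh]; norm_num [hFm1, hGm1, hF0, hG0, hC.grounded_left _ hqY,
      hC.grounded_right _ hqX, hC.grounded_left _ h01]
  have h10 : h 1 0 = (1 - pY) - C (1 - pX) (1 - pY) := by
    rw [hh]; norm_num [hF0, hG0, hGm1, hF1', hC.margin_right _ hqY,
      hC.grounded_right _ h11, hC.grounded_right _ hqX]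
  have h01' : h 0 1 = (1 - pX) - C (1 - pX) (1 - pY) := by
    rw [hh]; norm_num [hF0, hFm1, hG0, hG1', hC.margin_left _ hqX,
      hC.grounded_left _ h11, hC.grounded_left _ hqY]
  have h11' : h 1 1 = pX + pY - 1 + C (1 - pX) (1 - pY) := by
    rw [hh]; norm_num [hF0, hG0, hF1', hG1', hC.margin_left _ hqX, hC.margin_right _ hqY,
      hC.margin_left _ h11]
    ring
  have hx2 : ∀ x y : ℤ, 2 ≤ x → h x y = 0 := by
    intro x y hx
    rw [hh, hF1 x (by linarith), hF1 (x - 1) (by linarith)]; ring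
  have hy2 : ∀ x y : ℤ, 2 ≤ y → h x y = 0 := by
    intro x y hy
    rw [hh, hG1 y (by linarith), hG1 (y - 1) (by linarith)]; ring
  -- values of f, g
  have hf0 : f 0 = 1 - pX := by rw [hf]; norm_num [hF0, hFm1]
  have hf1 : f 1 = pX := by rw [hf]; norm_num [hF1', hF0]
  have hg0 : g 0 = 1 - pY := by rw [hg]; norm_num [hG0, hGm1]
  have hg1 : g 1 = pY := by rw [hg]; norm_num [hG1', hG0]
  have hf2 : ∀ x : ℤ, 2 ≤ x → f x = 0 := by
    intro x hx; rw [hf, hF1 x (by linarith), hF1 (x - 1) (by linarith)]; ring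
  have hg2 : ∀ y : ℤ, 2 ≤ y → g y = 0 := by
    intro y hy; rw [hg, hG1 y (by linarith), hG1 (y - 1) (by linarith)]; ring
  -- the term function
  set W : ℕ → ℕ → ℝ := fun x y =>
    h (x : ℤ) (y : ℤ) * ((1 - F x) * (1 - G y) + F ((x : ℤ) - 1) * G ((y : ℤ) - 1)
      - (1 / 2) * f x * g y) with hW
  have hnot : ∀ n : ℕ, n ∉ ({0, 1} : Finset ℕ) → (2 : ℤ) ≤ (n : ℤ) := by
    intro n hn
    simp only [Finset.mem_insert, Finset.mem_singleton] at hn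
    omega
  -- inner sums
  have inner_zero : ∀ x : ℕ, x ∉ ({0, 1} : Finset ℕ) → ∑' y : ℕ, W x y = 0 := by
    intro x hx
    have : ∀ y : ℕ, W x y = 0 := by
      intro y; simp only [hW]; rw [hx2 _ _ (hnot x hx)]; ring
    simp [this]
  have inner_fin : ∀ x : ℕ, ∑' y : ℕ, W x y = W x 0 + W x 1 := by
    intro x
    rw [tsum_eq_sum (s := {0, 1}) (by
      intro y hy
      simp only [hW]
      rw [hy2 _ _ (hnot y hy)]; ring)]
    simp
  have outer : ∑' (x : ℕ) (y : ℕ), W x y = (W 0 0 + W 0 1) + (W 1 0 + W 1 1) := by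
    rw [tsum_eq_sum (s := {0, 1}) (by intro x hx; exact inner_zero x hx)]
    simp [inner_fin]
  have Tsum : ∑' x : ℕ, (f x ^ 2 + g x ^ 2)
      = ((1 - pX) ^ 2 + (1 - pY) ^ 2) + (pX ^ 2 + pY ^ 2) := by
    rw [tsum_eq_sum (s := {0, 1}) (by
      intro n hn
      rw [hf2 _ (hnot n hn), hg2 _ (hnot n hn)]; ring)]
    simp [hf0, hf1, hg0, hg1]
  rw [hρ, outer, Tsum]
  simp only [hW, Nat.cast_zero, Nat.cast_one]
  norm_num [h00, h10, h01', h11', hf0, hf1, hg0, hg1, hF0, hG0, hFm1, hGm1, hF1', hG1']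
  ring
end

section
/- For Bernoulli random variables X, Y with success probabilities p_X, p_Y ∈ [0,1] coupled by any copula C, Spearman's rho ρ^S(X,Y) = −3 + 3C(1−p_X,1−p_Y) + 3p_X + 3p_Y − 3p_X p_Y satisfies −3/4 ≤ ρ^S(X,Y) ≤ 3/4, with the extremes attained when p_X = p_Y = 1/2 and C is the lower/upper Fréchet–Hoeffding bound respectively. -/
theorem stmt18 (C : ℝ → ℝ → ℝ)
    -- C satisfies the Fréchet–Hoeffding bounds
    (hFH : ∀ u ∈ Set.Icc (0 : ℝ) 1, ∀ v ∈ Set.Icc (0 : ℝ) 1,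
      max (u + v - 1) 0 ≤ C u v ∧ C u v ≤ min u v)
    (pX pY : ℝ) (hpX : pX ∈ Set.Icc (0 : ℝ) 1) (hpY : pY ∈ Set.Icc (0 : ℝ) 1)
    (ρ : ℝ)
    (hρ : ρ = -3 + 3 * C (1 - pX) (1 - pY) + 3 * pX + 3 * pY - 3 * pX * pY) :
    (-(3 / 4) ≤ ρ ∧ ρ ≤ 3 / 4)
    -- the upper extreme is attained at pX = pY = 1/2 with the upper Fréchet–Hoeffding copula
    ∧ -3 + 3 * min (1 - (1 / 2 : ℝ)) (1 - (1 / 2 : ℝ)) + 3 * (1 / 2) + 3 * (1 / 2)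
        - 3 * (1 / 2) * (1 / 2) = 3 / 4
    -- the lower extreme is attained at pX = pY = 1/2 with the lower Fréchet–Hoeffding copula
    ∧ -3 + 3 * max ((1 - (1 / 2 : ℝ)) + (1 - (1 / 2 : ℝ)) - 1) 0 + 3 * (1 / 2) + 3 * (1 / 2)
        - 3 * (1 / 2) * (1 / 2) = -(3 / 4) := by
  obtain ⟨hX0, hX1⟩ := hpX
  obtain ⟨hY0, hY1⟩ := hpY
  have hu : (1 - pX) ∈ Set.Icc (0 : ℝ) 1 := ⟨by linarith, by linarith⟩
  have hv : (1 - pY) ∈ Set.Icc (0 : ℝ) 1 := ⟨by linarith, by linarith⟩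
  obtain ⟨hlo, hhi⟩ := hFH _ hu _ hv
  refine ⟨⟨?_, ?_⟩, by norm_num, by norm_num⟩
  · rcases le_total ((1 - pX) + (1 - pY) - 1) 0 with h | h
    · rw [max_eq_right h] at hlo
      nlinarith [hlo, mul_nonneg hX0 hY0, sq_nonneg (pX + pY - 1), sq_nonneg (pX - pY)]
    · rw [max_eq_left h] at hlo
      nlinarith [hlo, sq_nonneg (pX - pY)]
  · rcases le_total (1 - pX) (1 - pY) with h | h
    · rw [min_eq_left h] at hhi
      nlinarith [hhi, sq_nonneg (1 - 2 * pX), mul_nonneg hY0 (by linarith : (0:ℝ) ≤ 1 - pX)]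
    · rw [min_eq_right h] at hhi
      nlinarith [hhi, sq_nonneg (1 - 2 * pY), mul_nonneg hX0 (by linarith : (0:ℝ) ≤ 1 - pY)]
end

section
/- The function g(p,q) = −3 + 3·min(1−p, 1−q) + 3p + 3q − 3pq on [0,1]² attains its maximum value 3/4 at p = q = 1/2, and the function g'(p,q) = −3 + 3·max(1−p−q, 0) + 3p + 3q − 3pq attains its minimum value −3/4 at p = q = 1/2. -/
theorem stmt19 (g g' : ℝ → ℝ → ℝ)
    (hg : ∀ p q : ℝ, g p q = -3 + 3 * min (1 - p) (1 - q) + 3 * p + 3 * q - 3 * p * q)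
    (hg' : ∀ p q : ℝ, g' p q = -3 + 3 * max (1 - p - q) 0 + 3 * p + 3 * q - 3 * p * q) :
    (g (1 / 2) (1 / 2) = 3 / 4
      ∧ ∀ p ∈ Set.Icc (0 : ℝ) 1, ∀ q ∈ Set.Icc (0 : ℝ) 1, g p q ≤ 3 / 4)
    ∧ (g' (1 / 2) (1 / 2) = -(3 / 4)
      ∧ ∀ p ∈ Set.Icc (0 : ℝ) 1, ∀ q ∈ Set.Icc (0 : ℝ) 1, -(3 / 4) ≤ g' p q) := by
  refine ⟨⟨by rw [hg]; norm_num, ?_⟩, ⟨by rw [hg']; norm_num, ?_⟩⟩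
  · rintro p ⟨hp0, hp1⟩ q ⟨hq0, hq1⟩
    rw [hg]
    rcases le_total (1 - p) (1 - q) with h | h
    · rw [min_eq_left h]; nlinarith [sq_nonneg (p - q), sq_nonneg (p + q - 1), mul_nonneg hp0 hq0, mul_nonneg (sub_nonneg.2 hp1) (sub_nonneg.2 hq1), mul_nonneg hq0 (sub_nonneg.2 hp1), mul_nonneg hp0 (sub_nonneg.2 hq1)]
    · rw [min_eq_right h]; nlinarith [sq_nonneg (p - q), sq_nonneg (p + q - 1), mul_nonneg hp0 hq0, mul_nonneg (sub_nonneg.2 hp1) (sub_nonneg.2 hq1), mul_nonneg hq0 (sub_nonneg.2 hp1), mul_nonneg hp0 (sub_nonneg.2 hq1)]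
  · rintro p ⟨hp0, hp1⟩ q ⟨hq0, hq1⟩
    rw [hg']
    rcases le_total (1 - p - q) 0 with h | h
    · rw [max_eq_right h]; nlinarith [sq_nonneg (p - q), sq_nonneg (p + q - 1), mul_nonneg hp0 hq0, mul_nonneg (sub_nonneg.2 hp1) (sub_nonneg.2 hq1), mul_nonneg hq0 (sub_nonneg.2 hp1), mul_nonneg hp0 (sub_nonneg.2 hq1)]
    · rw [max_eq_left h]; nlinarith [sq_nonneg (p - q), sq_nonneg (p + q - 1), mul_nonneg hp0 hq0, mul_nonneg (sub_nonneg.2 hp1) (sub_nonneg.2 hq1), mul_nonneg hq0 (sub_nonneg.2 hp1), mul_nonneg hp0 (sub_nonneg.2 hq1)]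
end
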